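/- arXiv:1305.2890 — 6 statements merged into one kernel-verified Lean document; each statement's English description precedes it below -/
import Mathlib

section
/- Let S = conv(X₁, …, X_N) be a conditional simplex in (L⁰)^d. For every permutation π of {1, …, N}, the elements Y₁^π, …, Y_N^π (where Y_k^π = (1/k) Σᵢ₌₁ᵏ X_{π(i)}) are affinely independent; hence each member C_π of the barycentric subdivision of S is a conditional simplex of dimension N. -/
open MeasureTheory Filter

noncomputable section

variable {Ω : Type*} [MeasurableSpace Ω]

/-- `L⁰(Ω,𝒜,P)`: equivalence classes of real-valued measurable functions modulo
`P`-almost-sure equality. -/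
abbrev L0 (P : Measure Ω) : Type _ := Ω →ₘ[P] ℝ

namespace L0

variable (P : Measure Ω)

/-- The indicator `1_A` of a measurable set as an element of `L⁰`. -/
def ind (A : Set Ω) : L0 P :=
  letI := Classical.dec (MeasurableSet A)
  if h : MeasurableSet A then
    AEEqFun.mk (A.indicator fun _ => (1 : ℝ)) (aestronglyMeasurable_const.indicator h)
  else 0

/-- A partition: a countable family of measurable sets, pairwise disjoint up to null
sets, covering `Ω` up to a null set. -/
structure IsPartition (A : ℕ → Set Ω) : Prop where
  meas : ∀ i, MeasurableSet (A i)
  disj : ∀ i j, i ≠ j → P (A i ∩ A j) = 0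
  full : P (⋃ i, A i) = 1

/-- `Z = Σᵢ 1_{Aᵢ} Xᵢ` in `L⁰`: `Z` agrees with `Xᵢ` on `Aᵢ`, i.e. `1_{Aᵢ}·Z = 1_{Aᵢ}·Xᵢ`. -/
def IsGluing1 (A : ℕ → Set Ω) (X : ℕ → L0 P) (Z : L0 P) : Prop :=
  ∀ i, ind P (A i) * Z = ind P (A i) * X i

/-- `Z = Σᵢ 1_{Aᵢ} Xᵢ` in `(L⁰)^d`. -/
def IsGluing {d : ℕ} (A : ℕ → Set Ω) (X : ℕ → Fin d → L0 P) (Z : Fin d → L0 P) : Prop :=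
  ∀ k, IsGluing1 P A (fun i => X i k) (Z k)

/-- The σ-stable hull `σ(𝒞)` of a set `𝒞 ⊆ (L⁰)^d`. -/
def sigmaHull {d : ℕ} (C : Set (Fin d → L0 P)) : Set (Fin d → L0 P) :=
  {Z | ∃ (A : ℕ → Set Ω) (X : ℕ → Fin d → L0 P),
    IsPartition P A ∧ (∀ i, X i ∈ C) ∧ IsGluing P A X Z}

/-- A function `f` defined (at least) on a σ-stable set `C ⊆ (L⁰)^d` is local if
`f(Σᵢ 1_{Aᵢ} Xᵢ) = Σᵢ 1_{Aᵢ} f(Xᵢ)` for every partition `(Aᵢ)` and family `(Xᵢ)` in `C`. -/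
def IsLocal {d e : ℕ} (C : Set (Fin d → L0 P)) (f : (Fin d → L0 P) → (Fin e → L0 P)) : Prop :=
  ∀ (A : ℕ → Set Ω) (X : ℕ → Fin d → L0 P) (Z : Fin d → L0 P),
    IsPartition P A → (∀ i, X i ∈ C) → Z ∈ C → IsGluing P A X Z →
    IsGluing P A (fun i => f (X i)) (f Z)

/-- Locality for functions with values in `L⁰`. -/
def IsLocalScalar {d : ℕ} (C : Set (Fin d → L0 P)) (f : (Fin d → L0 P) → L0 P) : Prop :=
  ∀ (A : ℕ → Set Ω) (X : ℕ → Fin d → L0 P) (Z : Fin d → L0 P),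
    IsPartition P A → (∀ i, X i ∈ C) → Z ∈ C → IsGluing P A X Z →
    IsGluing1 P A (fun i => f (X i)) (f Z)

/-- Locality for functions from `L⁰` to `L⁰`. -/
def IsLocal1 (C : Set (L0 P)) (f : L0 P → L0 P) : Prop :=
  ∀ (A : ℕ → Set Ω) (X : ℕ → L0 P) (Z : L0 P),
    IsPartition P A → (∀ i, X i ∈ C) → Z ∈ C → IsGluing1 P A X Z →
    IsGluing1 P A (fun i => f (X i)) (f Z)

/-- `P`-almost sure convergence of a sequence in `L⁰`. -/
def TendstoAS (X : ℕ → L0 P) (Y : L0 P) : Prop :=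
  ∀ᵐ ω ∂P, Tendsto (fun n => X n ω) atTop (nhds (Y ω))

/-- `P`-almost sure convergence of a sequence in `(L⁰)^d`. -/
def TendstoASd {d : ℕ} (X : ℕ → Fin d → L0 P) (Y : Fin d → L0 P) : Prop :=
  ∀ k, TendstoAS P (fun n => X n k) (Y k)

/-- Sequential continuity (w.r.t. `P`-a.s. convergence) of `f` on `C ⊆ (L⁰)^d`. -/
def SeqContinuous {d e : ℕ} (C : Set (Fin d → L0 P)) (f : (Fin d → L0 P) → (Fin e → L0 P)) :
    Prop :=
  ∀ (X : ℕ → Fin d → L0 P) (Y : Fin d → L0 P), (∀ n, X n ∈ C) → Y ∈ C →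
    TendstoASd P X Y → TendstoASd P (fun n => f (X n)) (f Y)

/-- Sequential continuity for functions from `L⁰` to `L⁰`. -/
def SeqContinuous1 (C : Set (L0 P)) (f : L0 P → L0 P) : Prop :=
  ∀ (X : ℕ → L0 P) (Y : L0 P), (∀ n, X n ∈ C) → Y ∈ C →
    TendstoAS P X Y → TendstoAS P (fun n => f (X n)) (f Y)

/-- The `L⁰`-convex hull `conv(X₁,…,X_N)` of a finite family in `(L⁰)^d`. -/
def conv {d : ℕ} {ι : Type*} [Fintype ι] (X : ι → Fin d → L0 P) : Set (Fin d → L0 P) :=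
  {Y | ∃ lam : ι → L0 P, (∀ i, 0 ≤ lam i) ∧ (∑ i, lam i) = 1 ∧ Y = ∑ i, lam i • X i}

/-- The affine hull `aff(X₁,…,X_N)` of a finite family in `(L⁰)^d`. -/
def aff {d : ℕ} {ι : Type*} [Fintype ι] (X : ι → Fin d → L0 P) : Set (Fin d → L0 P) :=
  {Y | ∃ lam : ι → L0 P, (∑ i, lam i) = 1 ∧ Y = ∑ i, lam i • X i}

/-- Affine independence of `X₁,…,X_N` in `(L⁰)^d`: either `N = 1`, or `N > 1` and
`Σᵢ₌₁^{N−1} λᵢ (Xᵢ − X_N) = 0` implies `λ₁ = ⋯ = λ_{N−1} = 0`. -/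
def AffInd {d : ℕ} : {N : ℕ} → (X : Fin N → Fin d → L0 P) → Prop
  | 0, _ => False
  | 1, _ => True
  | (m + 2), X => ∀ lam : Fin (m + 1) → L0 P,
      (∑ i : Fin (m + 1), lam i • (X i.castSucc - X (Fin.last (m + 1)))) = 0 → ∀ i, lam i = 0

/-- The `L⁰`-scalar product on `(L⁰)^d`. -/
def inner {d : ℕ} (X Y : Fin d → L0 P) : L0 P := ∑ k, X k * Y k

/-- The `L⁰`-norm on `(L⁰)^d`. -/
def norm {d : ℕ} (X : Fin d → L0 P) : L0 P :=
  AEEqFun.comp Real.sqrt Real.continuous_sqrt (inner P X X)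

/-- `D` is the essential supremum (least upper bound in the `P`-a.s. order) of a set
`F ⊆ L⁰`. -/
def IsEssSup (F : Set (L0 P)) (D : L0 P) : Prop :=
  (∀ X ∈ F, X ≤ D) ∧ ∀ D' : L0 P, (∀ X ∈ F, X ≤ D') → D ≤ D'

/-- `𝒞 ⊆ (L⁰)^d` is bounded if `esssup_{X ∈ 𝒞} ‖X‖` belongs to `L⁰`. -/
def Bounded {d : ℕ} (C : Set (Fin d → L0 P)) : Prop :=
  ∃ b : L0 P, ∀ X ∈ C, norm P X ≤ b

/-- `𝒞 ⊆ (L⁰)^d` is sequentially closed if it contains all `P`-a.s. limits of its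
sequences. -/
def SeqClosed {d : ℕ} (C : Set (Fin d → L0 P)) : Prop :=
  ∀ (X : ℕ → Fin d → L0 P) (Y : Fin d → L0 P), (∀ n, X n ∈ C) → TendstoASd P X Y → Y ∈ C

/-- `L⁰`-convexity of a subset of `(L⁰)^d`. -/
def L0Convex {d : ℕ} (C : Set (Fin d → L0 P)) : Prop :=
  ∀ X ∈ C, ∀ Y ∈ C, ∀ lam : L0 P, 0 ≤ lam → lam ≤ 1 → lam • X + (1 - lam) • Y ∈ C

/-- The vertices `Y_k^π = (1/k) Σᵢ₌₁ᵏ X_{π(i)}` of the member `C_π` of the barycentric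
subdivision (0-based: `bary P X π k = (1/(k+1)) Σ_{i ≤ k} X_{π(i)}`). -/
def bary {d N : ℕ} (X : Fin N → Fin d → L0 P) (π : Equiv.Perm (Fin N)) (k : Fin N) :
    Fin d → L0 P :=
  ((k.1 + 1 : ℝ)⁻¹) • ∑ i ∈ Finset.univ.filter (· ≤ k), X (π i)

end L0

end


section Aux

open MeasureTheory Finset

variable {Ω : Type*} [MeasurableSpace Ω] {P : Measure Ω}

noncomputable instance L0.instCommRing : CommRing (L0 P) :=
  { (inferInstance : AddCommGroup (L0 P)), (inferInstance : CommMonoid (L0 P)) with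
    left_distrib := fun a b c => by
      refine AEEqFun.ext ?_
      filter_upwards [AEEqFun.coeFn_mul a (b + c), AEEqFun.coeFn_add b c,
        AEEqFun.coeFn_add (a * b) (a * c), AEEqFun.coeFn_mul a b, AEEqFun.coeFn_mul a c]
        with ω h1 h2 h3 h4 h5
      simp only [h1, h3, Pi.mul_apply, Pi.add_apply, h2, h4, h5, mul_add]
    right_distrib := fun a b c => by
      refine AEEqFun.ext ?_
      filter_upwards [AEEqFun.coeFn_mul (a + b) c, AEEqFun.coeFn_add a b,
        AEEqFun.coeFn_add (a * c) (b * c), AEEqFun.coeFn_mul a c, AEEqFun.coeFn_mul b c]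
        with ω h1 h2 h3 h4 h5
      simp only [h1, h3, Pi.mul_apply, Pi.add_apply, h2, h4, h5, add_mul]
    zero_mul := fun a => by
      refine AEEqFun.ext ?_
      filter_upwards [AEEqFun.coeFn_mul (0 : L0 P) a, AEEqFun.coeFn_zero (β := ℝ) (μ := P)]
        with ω h1 h2
      simp only [h1, Pi.mul_apply, h2, Pi.zero_apply, zero_mul]
    mul_zero := fun a => by
      refine AEEqFun.ext ?_
      filter_upwards [AEEqFun.coeFn_mul a (0 : L0 P), AEEqFun.coeFn_zero (β := ℝ) (μ := P)]
        with ω h1 h2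
      simp only [h1, Pi.mul_apply, h2, Pi.zero_apply, mul_zero] }

instance L0.instIsScalarTowerR : IsScalarTower ℝ (L0 P) (L0 P) := by
  constructor
  intro c x y
  show (c • x) * y = c • (x * y)
  refine AEEqFun.ext ?_
  filter_upwards [AEEqFun.coeFn_mul (c • x) y, AEEqFun.coeFn_smul c x,
    AEEqFun.coeFn_smul c (x * y), AEEqFun.coeFn_mul x y] with ω h1 h2 h3 h4
  simp only [h1, Pi.mul_apply, h2, Pi.smul_apply, h3, h4, smul_eq_mul]
  ring

instance L0.instSMulCommClassR : SMulCommClass (L0 P) ℝ (L0 P) := by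
  constructor
  intro x c y
  show x * (c • y) = c • (x * y)
  refine AEEqFun.ext ?_
  filter_upwards [AEEqFun.coeFn_mul x (c • y), AEEqFun.coeFn_smul c y,
    AEEqFun.coeFn_smul c (x * y), AEEqFun.coeFn_mul x y] with ω h1 h2 h3 h4
  simp only [h1, Pi.mul_apply, h2, Pi.smul_apply, h3, h4, smul_eq_mul]
  ring

/-- Affine independence implies: a linear combination summing to zero and vanishing
must have all coefficients zero. -/
theorem affInd_aux {d m : ℕ} {X : Fin (m + 2) → Fin d → L0 P} (hX : L0.AffInd P X)
    (μ : Fin (m + 2) → L0 P) (h1 : ∑ j, μ j • X j = 0) (h2 : ∑ j, μ j = 0) :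
    ∀ j, μ j = 0 := by
  have hc : ∀ i : Fin (m + 1), μ i.castSucc = 0 := by
    refine hX (fun i => μ i.castSucc) ?_
    have e1 : ∑ i : Fin (m + 1), μ i.castSucc • (X i.castSucc - X (Fin.last (m + 1)))
        = ∑ j, μ j • X j - (∑ j, μ j) • X (Fin.last (m + 1)) := by
      rw [Fin.sum_univ_castSucc (f := fun j => μ j • X j), Fin.sum_univ_castSucc (f := μ)]
      simp only [smul_sub, Finset.sum_sub_distrib, add_smul, Finset.sum_smul]
      abel
    rw [e1, h1, h2, zero_smul, sub_zero]
  intro j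
  refine Fin.lastCases ?_ hc j
  rw [Fin.sum_univ_castSucc (f := μ)] at h2
  have : ∑ i : Fin (m + 1), μ i.castSucc = 0 := by
    simp [hc]
  rw [this, zero_add] at h2
  exact h2

end Aux

open MeasureTheory in
/-- the vertices of each member of the barycentric subdivision are affinely
independent; hence each `C_π` is a conditional simplex of dimension `N`. -/
theorem stmt_8 {Ω : Type*} [MeasurableSpace Ω] (P : Measure Ω) [IsProbabilityMeasure P]
    {d N : ℕ} (X : Fin N → Fin d → L0 P) (hX : L0.AffInd P X) :
    ∀ π : Equiv.Perm (Fin N), L0.AffInd P (L0.bary P X π) := by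
  intro π
  match N, X, hX with
  | 0, X, hX => exact hX.elim
  | 1, X, hX => trivial
  | (m + 2), X, hX =>
    intro lam hlam
    classical
    set μ : Fin (m + 2) → L0 P := fun j =>
      (∑ k ∈ Finset.univ.filter (fun k : Fin (m + 1) => j ≤ k.castSucc),
        ((k.1 + 1 : ℝ)⁻¹) • lam k) - ((m + 2 : ℝ)⁻¹) • ∑ k, lam k with hμ
    have hinv : ∀ k : Fin (m + 1),
        ((k.1 + 1 : ℝ)) • (((k.1 + 1 : ℝ)⁻¹) • lam k) = lam k := by
      intro k
      rw [smul_smul, mul_inv_cancel₀ (by positivity), one_smul]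
    -- the double-sum swap
    have hswap : ∀ (f : Fin (m + 1) → Fin (m + 2) → Fin d → L0 P),
        ∑ j : Fin (m + 2), ∑ k ∈ Finset.univ.filter (fun k : Fin (m + 1) => j ≤ k.castSucc),
          f k j
        = ∑ k : Fin (m + 1), ∑ j ∈ Finset.univ.filter (fun j : Fin (m + 2) => j ≤ k.castSucc),
          f k j := by
      intro f
      simp only [Finset.sum_filter]
      exact Finset.sum_comm
    have hswap1 : ∀ (f : Fin (m + 1) → Fin (m + 2) → L0 P),
        ∑ j : Fin (m + 2), ∑ k ∈ Finset.univ.filter (fun k : Fin (m + 1) => j ≤ k.castSucc),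
          f k j
        = ∑ k : Fin (m + 1), ∑ j ∈ Finset.univ.filter (fun j : Fin (m + 2) => j ≤ k.castSucc),
          f k j := by
      intro f
      simp only [Finset.sum_filter]
      exact Finset.sum_comm
    have hlast : (Finset.univ.filter (fun j : Fin (m + 2) => j ≤ Fin.last (m + 1)))
        = Finset.univ := by
      refine Finset.filter_true_of_mem fun j _ => Fin.le_last j
    -- Step 1: the given combination equals ∑ j, μ j • X (π j)
    have key : ∑ j, μ j • X (π j) = 0 := by
      have e1 : ∑ j, μ j • X (π j)
          = (∑ j : Fin (m + 2),
              ∑ k ∈ Finset.univ.filter (fun k : Fin (m + 1) => j ≤ k.castSucc),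
                (((k.1 + 1 : ℝ)⁻¹) • lam k) • X (π j))
            - ∑ j : Fin (m + 2), ((((m + 2 : ℝ))⁻¹) • ∑ k, lam k) • X (π j) := by
        simp only [hμ, sub_smul, Finset.sum_sub_distrib, Finset.sum_smul]
      have e3 : ∑ j : Fin (m + 2),
            ∑ k ∈ Finset.univ.filter (fun k : Fin (m + 1) => j ≤ k.castSucc),
              (((k.1 + 1 : ℝ)⁻¹) • lam k) • X (π j)
          = ∑ k : Fin (m + 1), lam k • L0.bary P X π k.castSucc := by
        rw [hswap]
        refine Finset.sum_congr rfl fun k _ => ?_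
        rw [L0.bary, smul_comm, Finset.smul_sum]
        simp only [smul_assoc, Fin.coe_castSucc]
        rw [Finset.smul_sum]
      have e4 : ∑ j : Fin (m + 2), ((((m + 2 : ℝ))⁻¹) • ∑ k, lam k) • X (π j)
          = ∑ k : Fin (m + 1), lam k • L0.bary P X π (Fin.last (m + 1)) := by
        rw [← Finset.smul_sum, ← Finset.sum_smul, L0.bary, hlast, smul_assoc]
        conv_rhs => rw [smul_comm]
        congr 1
        simp only [Fin.val_last]
        push_cast
        ring
      rw [e1, e3, e4, ← Finset.sum_sub_distrib]
      simpa [smul_sub] using hlam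
    -- Step 2: ∑ μ = 0
    have hμsum : ∑ j, μ j = 0 := by
      have e1 : ∑ j, μ j
          = (∑ j : Fin (m + 2),
              ∑ k ∈ Finset.univ.filter (fun k : Fin (m + 1) => j ≤ k.castSucc),
                ((k.1 + 1 : ℝ)⁻¹) • lam k)
            - ∑ j : Fin (m + 2), (((m + 2 : ℝ))⁻¹) • ∑ k, lam k := by
        simp only [hμ, Finset.sum_sub_distrib]
      have e2 : ∑ j : Fin (m + 2),
            ∑ k ∈ Finset.univ.filter (fun k : Fin (m + 1) => j ≤ k.castSucc),
              ((k.1 + 1 : ℝ)⁻¹) • lam k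
          = ∑ k, lam k := by
        rw [hswap1 fun k _ => ((k.1 + 1 : ℝ)⁻¹) • lam k]
        refine Finset.sum_congr rfl fun k _ => ?_
        have hcard : (Finset.univ.filter (fun j : Fin (m + 2) => j ≤ k.castSucc)).card
            = k.1 + 1 := by
          have : Finset.univ.filter (fun j : Fin (m + 2) => j ≤ k.castSucc)
              = Finset.Iic k.castSucc := by
            ext j; simp
          rw [this, Fin.card_Iic, Fin.coe_castSucc]
        rw [Finset.sum_const, hcard, ← Nat.cast_smul_eq_nsmul ℝ]
        push_cast
        exact hinv k
      have e3 : ∑ j : Fin (m + 2), (((m + 2 : ℝ))⁻¹) • ∑ k, lam k = ∑ k, lam k := by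
        rw [Finset.sum_const, Finset.card_univ, Fintype.card_fin, ← Nat.cast_smul_eq_nsmul ℝ,
          smul_smul]
        push_cast
        rw [mul_inv_cancel₀ (by positivity), one_smul]
      rw [e1, e2, e3, sub_self]
    -- Step 3: μ = 0
    have hμ0 : ∀ j, μ j = 0 := by
      have h1 : ∑ j, μ (π.symm j) • X j = 0 := by
        rw [← Equiv.sum_comp π (fun j => μ (π.symm j) • X j)]
        simpa using key
      have h2 : ∑ j, μ (π.symm j) = 0 := by
        rw [Equiv.sum_comp π.symm μ]; exact hμsum
      intro j
      have := affInd_aux hX (fun j => μ (π.symm j)) h1 h2 (π j)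
      simpa using this
    -- Step 4: extract lam = 0
    intro k
    have hA := hμ0 k.castSucc
    have hB := hμ0 k.succ
    simp only [hμ, sub_eq_zero] at hA hB
    have hfA : Finset.univ.filter (fun k' : Fin (m + 1) => k.castSucc ≤ k'.castSucc)
        = Finset.univ.filter (fun k' : Fin (m + 1) => k ≤ k') := by
      simp only [Fin.castSucc_le_castSucc_iff]
    have hfB : Finset.univ.filter (fun k' : Fin (m + 1) => k.succ ≤ k'.castSucc)
        = Finset.univ.filter (fun k' : Fin (m + 1) => k < k') := by
      simp only [Fin.succ_le_castSucc_iff]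
    have hins : Finset.univ.filter (fun k' : Fin (m + 1) => k ≤ k')
        = insert k (Finset.univ.filter (fun k' : Fin (m + 1) => k < k')) := by
      ext x
      simp only [Finset.mem_filter, Finset.mem_univ, true_and, Finset.mem_insert]
      constructor
      · intro h
        rcases eq_or_lt_of_le h with h | h
        · exact Or.inl h.symm
        · exact Or.inr h
      · rintro (rfl | h)
        · exact le_refl _
        · exact le_of_lt h
    have hnotmem : k ∉ Finset.univ.filter (fun k' : Fin (m + 1) => k < k') := by
      simp
    have hzero : ((k.1 + 1 : ℝ)⁻¹) • lam k = 0 := by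
      have : ∑ k' ∈ Finset.univ.filter (fun k' : Fin (m + 1) => k.castSucc ≤ k'.castSucc),
          ((k'.1 + 1 : ℝ)⁻¹) • lam k'
          = ((k.1 + 1 : ℝ)⁻¹) • lam k
            + ∑ k' ∈ Finset.univ.filter (fun k' : Fin (m + 1) => k.succ ≤ k'.castSucc),
              ((k'.1 + 1 : ℝ)⁻¹) • lam k' := by
        rw [hfA, hfB, hins, Finset.sum_insert hnotmem]
      rw [hA, hB] at this
      exact (right_eq_add.mp this)
    rw [← hinv k, hzero, smul_zero]
end

section
/- Let S = conv(X₁, …, X_N) be a conditional simplex in (L⁰)^d with barycentric subdivision (C_π)_{π ∈ S_N}, and let π, π̄ be permutations of {1, …, N}. Set J = {j ∈ {1, …, N} : {π(1), …, π(j)} = {π̄(1), …, π̄(j)}}. Then C_π ∩ C_π̄ = conv({(1/j) Σ_{k=1}^j X_{π(k)} : j ∈ J}); in particular, C_π ∩ C_π̄ is a conditional simplex, and if π ≠ π̄ its dimension |J| is strictly less than N. -/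
open MeasureTheory Filter

noncomputable section Stmt9Aux

namespace Stmt9

open MeasureTheory Filter Finset

variable {α : Type*} {l : Filter α}

instance grmSMulComm : SMulCommClass ℝ (Germ l ℝ) (Germ l ℝ) := by
  constructor
  intro r a b
  induction a using Germ.inductionOn with
  | h f =>
    induction b using Germ.inductionOn with
    | h g =>
      simp only [smul_eq_mul, ← Germ.coe_mul, ← Germ.coe_smul]
      exact congrArg _ (funext fun x => (mul_smul_comm r (f x) (g x)).symm)

instance grmTower : IsScalarTower ℝ (Germ l ℝ) (Germ l ℝ) := by
  constructor
  intro r a b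
  induction a using Germ.inductionOn with
  | h f =>
    induction b using Germ.inductionOn with
    | h g =>
      simp only [smul_eq_mul, ← Germ.coe_mul, ← Germ.coe_smul]
      exact congrArg _ (funext fun x => smul_mul_assoc r (f x) (g x))

instance grmPosSMul : PosSMulMono ℝ (Germ l ℝ) := by
  constructor
  intro r hr a b hab
  induction a using Germ.inductionOn with
  | h f =>
    induction b using Germ.inductionOn with
    | h g =>
      rw [← Germ.coe_smul, ← Germ.coe_smul]
      rw [Germ.coe_le] at hab ⊢
      filter_upwards [hab] with x hx
      exact smul_le_smul_of_nonneg_left hx hr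

variable {Ω : Type*} [MeasurableSpace Ω] {P : MeasureTheory.Measure Ω}

/-! ### Transfer toolkit between `L0 P` and germs -/

lemma g_eq {a b : L0 P} : a = b ↔ a.toGerm = b.toGerm :=
  ⟨fun h => congrArg _ h, fun h => MeasureTheory.AEEqFun.toGerm_injective h⟩

lemma g_le {a b : L0 P} : a ≤ b ↔ a.toGerm ≤ b.toGerm := Iff.rfl

lemma g_sum {ι : Type*} (s : Finset ι) (f : ι → L0 P) :
    (∑ i ∈ s, f i).toGerm = ∑ i ∈ s, (f i).toGerm :=
  map_sum (MeasureTheory.AEEqFun.toGermAddMonoidHom) f s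

lemma L0_zero_mul (x : L0 P) : (0 : L0 P) * x = 0 := by
  rw [g_eq, MeasureTheory.AEEqFun.mul_toGerm, MeasureTheory.AEEqFun.zero_toGerm, zero_mul]

lemma L0_zero_smul_vec {d : ℕ} (x : Fin d → L0 P) : (0 : L0 P) • x = 0 := by
  funext c
  exact L0_zero_mul (x c)

/-! ### The triangular coefficient transform -/

variable {N d : ℕ}

/-- `Bv v k = ∑_{j ≥ k} (j+1)⁻¹ • v j`. -/
def Bv {M : Type*} [AddCommMonoid M] [Module ℝ M] (v : Fin N → M) (k : Fin N) : M :=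
  ∑ j ∈ univ.filter (k ≤ ·), ((j.1 : ℝ) + 1)⁻¹ • v j

lemma Bv_split {M : Type*} [AddCommMonoid M] [Module ℝ M] (v : Fin N → M) (k : Fin N) :
    Bv v k = ((k.1 : ℝ) + 1)⁻¹ • v k + ∑ j ∈ univ.filter (k < ·), ((j.1 : ℝ) + 1)⁻¹ • v j := by
  have h : univ.filter (k ≤ ·) = insert k (univ.filter (k < ·)) := by
    ext j
    simp [le_iff_lt_or_eq, or_comm, eq_comm]
  rw [Bv, h, sum_insert (by simp)]

lemma Bv_germ (lam : Fin N → L0 P) (k : Fin N) :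
    (Bv lam k).toGerm = Bv (fun j => (lam j).toGerm) k := by
  simp [Bv, g_sum, MeasureTheory.AEEqFun.smul_toGerm]

lemma filter_le_card (k : Fin N) : (univ.filter (· ≤ k)).card = k.1 + 1 := by
  have : univ.filter (· ≤ k) = Iic k := by ext j; simp
  rw [this, Fin.card_Iic]

lemma Bv_total {M : Type*} [AddCommMonoid M] [Module ℝ M] (v : Fin N → M)
    (π : Equiv.Perm (Fin N)) : ∑ i, Bv v (π⁻¹ i) = ∑ k, v k := by
  rw [Equiv.sum_comp (π⁻¹ : Equiv.Perm (Fin N)) (Bv v)]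
  unfold Bv
  rw [sum_comm' (t' := univ) (s' := fun j => univ.filter (· ≤ j))
    (fun x y => by simp)]
  refine Finset.sum_congr rfl fun k _ => ?_
  rw [sum_const, filter_le_card, ← Nat.cast_smul_eq_nsmul ℝ, smul_smul]
  rw [Nat.cast_add, Nat.cast_one, mul_inv_cancel₀ (by positivity), one_smul]

lemma inv_smul_zero {M : Type*} [AddCommMonoid M] [Module ℝ M] {x : M} {c : ℝ}
    (hc : c ≠ 0) (h : c • x = 0) : x = 0 := by
  have := congrArg (fun y => c⁻¹ • y) h
  simpa [smul_smul, inv_mul_cancel₀ hc] using this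

/-! ### Expansion of barycentric combinations -/

lemma expandG (x : Fin N → Fin d → Germ l ℝ) (π : Equiv.Perm (Fin N))
    (v : Fin N → Germ l ℝ) (c : Fin d) :
    ∑ k, v k * (((k.1 : ℝ) + 1)⁻¹ • ∑ i ∈ univ.filter (· ≤ k), x (π i) c)
      = ∑ i, Bv v (π⁻¹ i) * x i c := by
  have step1 : ∀ k : Fin N,
      v k * (((k.1 : ℝ) + 1)⁻¹ • ∑ i ∈ univ.filter (· ≤ k), x (π i) c)
        = ∑ i ∈ univ.filter (· ≤ k), ((k.1 : ℝ) + 1)⁻¹ • (v k * x (π i) c) := by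
    intro k
    rw [mul_smul_comm, Finset.mul_sum, Finset.smul_sum]
  rw [Finset.sum_congr rfl fun k _ => step1 k]
  rw [sum_comm' (t' := univ) (s' := fun i => univ.filter (i ≤ ·)) (fun a b => by simp)]
  have step2 : ∀ i : Fin N,
      ∑ k ∈ univ.filter (i ≤ ·), ((k.1 : ℝ) + 1)⁻¹ • (v k * x (π i) c)
        = Bv v i * x (π i) c := by
    intro i
    rw [Bv, Finset.sum_mul]
    exact Finset.sum_congr rfl fun k _ => (smul_mul_assoc _ _ _).symm
  rw [Finset.sum_congr rfl fun i _ => step2 i]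
  exact Fintype.sum_equiv π (fun i => Bv v i * x (π i) c)
    (fun i => Bv v (π⁻¹ i) * x i c) (fun i => by simp)

lemma expandL (X : Fin N → Fin d → L0 P) (π : Equiv.Perm (Fin N)) (lam : Fin N → L0 P)
    (c : Fin d) :
    (∑ k, lam k • L0.bary P X π k) c = ∑ i, Bv lam (π⁻¹ i) * X i c := by
  have happ : (∑ k, lam k • L0.bary P X π k) c = ∑ k, lam k * (L0.bary P X π k c) := by
    rw [Finset.sum_apply]; rfl
  rw [happ, g_eq]
  have hb : ∀ k, (L0.bary P X π k c).toGerm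
      = ((k.1 : ℝ) + 1)⁻¹ • ∑ i ∈ univ.filter (· ≤ k), (X (π i) c).toGerm := by
    intro k
    show ((((k.1 : ℝ) + 1)⁻¹ • ∑ i ∈ univ.filter (· ≤ k), X (π i)) c).toGerm = _
    rw [Pi.smul_apply, Finset.sum_apply, MeasureTheory.AEEqFun.smul_toGerm, g_sum]
  simp only [g_sum, MeasureTheory.AEEqFun.mul_toGerm, Bv_germ]
  rw [Finset.sum_congr rfl fun k _ => by rw [hb k]]
  exact expandG (fun i c => (X i c).toGerm) π (fun k => (lam k).toGerm) c

/-! ### Affine independence: auxiliary linear form -/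

def AffIndAuxL (X : Fin N → Fin d → L0 P) : Prop :=
  ∀ ν : Fin N → L0 P, (∀ c, ∑ i, ν i * X i c = 0) → (∑ i, ν i) = 0 → ∀ i, ν i = 0

lemma affInd_ne_zero (X : Fin N → Fin d → L0 P) (h : L0.AffInd P X) : N ≠ 0 := by
  rintro rfl
  exact h

lemma germ_affine_combo {m : ℕ} (w y : Fin m → Germ l ℝ) (b : Germ l ℝ) :
    ∑ i, w i * (y i - b) = ∑ i, w i * y i - (∑ i, w i) * b := by
  rw [Finset.sum_mul, ← Finset.sum_sub_distrib]
  exact Finset.sum_congr rfl fun i _ => mul_sub _ _ _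

lemma aux_of_affInd : ∀ {N : ℕ} (X : Fin N → Fin d → L0 P), L0.AffInd P X → AffIndAuxL X
  | 0, _, h => h.elim
  | 1, _, _ => by
      intro ν _ h2 i
      have h0 : ν 0 = 0 := by simpa using h2
      have : i = 0 := Subsingleton.elim i 0
      rw [this]; exact h0
  | (m+2), X, h => by
      intro ν h1 h2
      have hkey : ∑ i : Fin (m+1), (fun i : Fin (m+1) => ν i.castSucc) i •
          (X i.castSucc - X (Fin.last (m+1))) = 0 := by
        funext c
        rw [show ((0 : Fin d → L0 P) c) = 0 from rfl] at *
        have happ : (∑ i : Fin (m+1), (fun i : Fin (m+1) => ν i.castSucc) i •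
            (X i.castSucc - X (Fin.last (m+1)))) c
            = ∑ i : Fin (m+1), ν i.castSucc * (X i.castSucc c - X (Fin.last (m+1)) c) := by
          rw [Finset.sum_apply]; rfl
        rw [happ, g_eq]
        have hg1 := g_eq.mp (h1 c)
        simp only [g_sum, MeasureTheory.AEEqFun.mul_toGerm,
          MeasureTheory.AEEqFun.zero_toGerm] at hg1
        have hg2 := g_eq.mp h2
        simp only [g_sum, MeasureTheory.AEEqFun.zero_toGerm] at hg2
        rw [Fin.sum_univ_castSucc] at hg1 hg2
        simp only [g_sum, MeasureTheory.AEEqFun.mul_toGerm, MeasureTheory.AEEqFun.sub_toGerm,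
          MeasureTheory.AEEqFun.zero_toGerm]
        rw [germ_affine_combo]
        linear_combination hg1 - hg2 * (X (Fin.last (m+1)) c).toGerm
      have hz := h (fun i : Fin (m+1) => ν i.castSucc) hkey
      have hlast : ν (Fin.last (m+1)) = 0 := by
        have := h2
        rw [Fin.sum_univ_castSucc] at this
        rw [Finset.sum_congr rfl fun i _ => hz i, Finset.sum_const, smul_zero,
          zero_add] at this
        exact this
      intro i
      refine Fin.lastCases ?_ ?_ i
      · exact hlast
      · exact hz

lemma affInd_of_aux : ∀ {N : ℕ} (X : Fin N → Fin d → L0 P), AffIndAuxL X → N ≠ 0 →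
    L0.AffInd P X
  | 0, _, _, h0 => absurd rfl h0
  | 1, _, _, _ => trivial
  | (m+2), X, haux, _ => by
      intro lam hlam
      set ν : Fin (m+2) → L0 P := Fin.lastCases (-∑ j, lam j) lam with hν
      have hcs : ∀ i : Fin (m+1), ν i.castSucc = lam i := fun i => by
        simp only [hν, Fin.lastCases_castSucc]
      have hlst : ν (Fin.last (m+1)) = -∑ j, lam j := by
        simp only [hν, Fin.lastCases_last]
      have h1 : ∀ c, ∑ i, ν i * X i c = 0 := by
        intro c
        have happ := congrFun hlam c
        have happ' : ∑ i : Fin (m+1), lam i * (X i.castSucc c - X (Fin.last (m+1)) c)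
            = 0 := by
          rw [show ((0 : Fin d → L0 P) c) = 0 from rfl] at happ
          rw [← happ, Finset.sum_apply]; rfl
        rw [g_eq]
        have hg := g_eq.mp happ'
        simp only [g_sum, MeasureTheory.AEEqFun.mul_toGerm, MeasureTheory.AEEqFun.sub_toGerm,
          MeasureTheory.AEEqFun.zero_toGerm] at hg
        rw [germ_affine_combo] at hg
        simp only [g_sum, MeasureTheory.AEEqFun.mul_toGerm, MeasureTheory.AEEqFun.zero_toGerm]
        rw [Fin.sum_univ_castSucc]
        have hcsg : ∀ i : Fin (m+1), (ν i.castSucc).toGerm = (lam i).toGerm :=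
          fun i => congrArg _ (hcs i)
        have hlstg : (ν (Fin.last (m+1))).toGerm = -∑ j, (lam j).toGerm := by
          rw [hlst, MeasureTheory.AEEqFun.neg_toGerm, g_sum]
        rw [Finset.sum_congr rfl fun i _ => by rw [hcsg i], hlstg]
        linear_combination hg
      have h2 : ∑ i, ν i = 0 := by
        rw [Fin.sum_univ_castSucc, Finset.sum_congr rfl fun i _ => hcs i, hlst,
          add_neg_cancel]
      have hz := haux ν h1 h2
      intro i
      rw [← hcs i]
      exact hz _

lemma aux_comp {M : ℕ} (X : Fin N → Fin d → L0 P) (h : AffIndAuxL X)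
    (f : Fin M → Fin N) (hf : Function.Injective f) :
    AffIndAuxL (fun i => X (f i)) := by
  intro μ h1 h2
  set ν : Fin N → L0 P := fun i => ∑ j ∈ univ.filter (f · = i), μ j with hν
  have hsum : ∀ (t : Fin M → L0 P), ∑ i : Fin N, ∑ j ∈ univ.filter (f · = i), t j
      = ∑ j, t j := by
    intro t
    exact Finset.sum_fiberwise_of_maps_to (fun j _ => mem_univ (f j)) t
  have hA : ∀ c, ∑ i, ν i * X i c = 0 := by
    intro c
    rw [g_eq]
    have hg := g_eq.mp (h1 c)
    simp only [g_sum, MeasureTheory.AEEqFun.mul_toGerm,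
      MeasureTheory.AEEqFun.zero_toGerm] at hg ⊢
    have : ∀ i : Fin N, (∑ j ∈ univ.filter (f · = i), (μ j).toGerm) * (X i c).toGerm
        = ∑ j ∈ univ.filter (f · = i), (μ j).toGerm * (X (f j) c).toGerm := by
      intro i
      rw [Finset.sum_mul]
      refine Finset.sum_congr rfl fun j hj => ?_
      rw [(mem_filter.mp hj).2]
    calc ∑ i, (ν i).toGerm * (X i c).toGerm
        = ∑ i : Fin N, ∑ j ∈ univ.filter (f · = i), (μ j).toGerm * (X (f j) c).toGerm := by
          refine Finset.sum_congr rfl fun i _ => ?_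
          rw [show (ν i).toGerm = ∑ j ∈ univ.filter (f · = i), (μ j).toGerm from by
            rw [hν]; exact g_sum _ _]
          exact this i
      _ = ∑ j, (μ j).toGerm * (X (f j) c).toGerm :=
          Finset.sum_fiberwise_of_maps_to (fun j _ => mem_univ (f j)) _
      _ = 0 := hg
  have hB : ∑ i, ν i = 0 := by
    rw [hν]
    rw [hsum μ]
    exact h2
  have hz := h ν hA hB
  intro j0
  have hfib : univ.filter (f · = f j0) = {j0} := by
    ext j
    simp [hf.eq_iff]
  have := hz (f j0)
  rw [hν] at this
  simp only [hfib, Finset.sum_singleton] at this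
  exact this

lemma aux_bary (X : Fin N → Fin d → L0 P) (h : AffIndAuxL X) (π : Equiv.Perm (Fin N)) :
    AffIndAuxL (L0.bary P X π) := by
  intro μ h1 h2
  have hE : ∀ c, ∑ i, Bv μ (π⁻¹ i) * X i c = 0 := by
    intro c
    rw [← expandL X π μ c, Finset.sum_apply]
    exact h1 c
  have htot : ∑ i, Bv μ (π⁻¹ i) = 0 := by rw [Bv_total]; exact h2
  have hBz := h _ hE htot
  have hB : ∀ k, Bv μ k = 0 := fun k => by
    have := hBz (π k)
    rwa [Equiv.Perm.inv_def, Equiv.symm_apply_apply] at this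
  have key : ∀ n : ℕ, ∀ k : Fin N, N - k.1 ≤ n → μ k = 0 := by
    intro n
    induction n with
    | zero =>
      intro k hk
      exact absurd hk (by have := k.2; omega)
    | succ n ih =>
      intro k hk
      have htail : ∑ j ∈ univ.filter (k < ·), ((j.1 : ℝ) + 1)⁻¹ • μ j = 0 := by
        refine Finset.sum_eq_zero fun j hj => ?_
        have hkj : k.1 < j.1 := Fin.lt_def.mp (mem_filter.mp hj).2
        have hμ : μ j = 0 := ih j (by have := j.2; omega)
        rw [hμ, smul_zero]
      have hsplit := Bv_split μ k
      rw [hB k, htail, add_zero] at hsplit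
      exact inv_smul_zero (by positivity) hsplit.symm
  intro k
  exact key N k (by omega)

lemma orderG {π πb : Equiv.Perm (Fin N)} (v w : Fin N → Germ l ℝ)
    (hv : ∀ k, 0 ≤ v k) (hw : ∀ k, 0 ≤ w k)
    (heq : ∀ i, Bv v (π⁻¹ i) = Bv w (πb⁻¹ i))
    {j : Fin N} (hne : (Iic j).image π ≠ (Iic j).image πb) : v j = 0 := by
  have hcard : ((Iic j).image π).card = ((Iic j).image πb).card := by
    rw [Finset.card_image_of_injective _ π.injective,
      Finset.card_image_of_injective _ πb.injective]
  have hAB : ¬ (Iic j).image π ⊆ (Iic j).image πb := fun hs =>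
    hne (Finset.eq_of_subset_of_card_le hs (le_of_eq hcard.symm))
  have hBA : ¬ (Iic j).image πb ⊆ (Iic j).image π := fun hs =>
    hne (Finset.eq_of_subset_of_card_le hs (le_of_eq hcard)).symm
  obtain ⟨i, hiA, hiB⟩ := Finset.not_subset.mp hAB
  obtain ⟨i', hiB', hiA'⟩ := Finset.not_subset.mp hBA
  have hi1 : π⁻¹ i ≤ j := by
    obtain ⟨a, ha, rfl⟩ := Finset.mem_image.mp hiA
    rw [Equiv.Perm.inv_def, Equiv.symm_apply_apply]
    exact Finset.mem_Iic.mp ha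
  have hi2 : j < πb⁻¹ i := by
    by_contra hcon
    push_neg at hcon
    exact hiB (Finset.mem_image.mpr ⟨πb⁻¹ i, Finset.mem_Iic.mpr hcon,
      Equiv.apply_symm_apply πb i⟩)
  have hi3 : πb⁻¹ i' ≤ j := by
    obtain ⟨a, ha, rfl⟩ := Finset.mem_image.mp hiB'
    rw [Equiv.Perm.inv_def, Equiv.symm_apply_apply]
    exact Finset.mem_Iic.mp ha
  have hi4 : j < π⁻¹ i' := by
    by_contra hcon
    push_neg at hcon
    exact hiA' (Finset.mem_image.mpr ⟨π⁻¹ i', Finset.mem_Iic.mpr hcon,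
      Equiv.apply_symm_apply π i'⟩)
  set T := ∑ jj ∈ univ.filter (j < ·), ((jj.1 : ℝ) + 1)⁻¹ • v jj with hT
  set U := ∑ jj ∈ univ.filter (j < ·), ((jj.1 : ℝ) + 1)⁻¹ • w jj with hU
  have hmono_v : ∀ {a b : Fin N}, a ≤ b → Bv v b ≤ Bv v a := by
    intro a b hab
    refine Finset.sum_le_sum_of_subset_of_nonneg ?_ fun k _ _ =>
      smul_nonneg (by positivity) (hv k)
    intro k hk
    simp only [mem_filter, mem_univ, true_and] at hk ⊢
    exact hab.trans hk
  have hmono_w : ∀ {a b : Fin N}, a ≤ b → Bv w b ≤ Bv w a := by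
    intro a b hab
    refine Finset.sum_le_sum_of_subset_of_nonneg ?_ fun k _ _ =>
      smul_nonneg (by positivity) (hw k)
    intro k hk
    simp only [mem_filter, mem_univ, true_and] at hk ⊢
    exact hab.trans hk
  have h1 : ((j.1 : ℝ) + 1)⁻¹ • v j + T ≤ U := by
    calc ((j.1 : ℝ) + 1)⁻¹ • v j + T = Bv v j := (Bv_split v j).symm
    _ ≤ Bv v (π⁻¹ i) := hmono_v hi1
    _ = Bv w (πb⁻¹ i) := heq i
    _ ≤ U := by
        refine Finset.sum_le_sum_of_subset_of_nonneg ?_ fun k _ _ =>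
          smul_nonneg (by positivity) (hw k)
        intro k hk
        simp only [mem_filter, mem_univ, true_and] at hk ⊢
        exact lt_of_lt_of_le hi2 hk
  have h2 : ((j.1 : ℝ) + 1)⁻¹ • w j + U ≤ T := by
    calc ((j.1 : ℝ) + 1)⁻¹ • w j + U = Bv w j := (Bv_split w j).symm
    _ ≤ Bv w (πb⁻¹ i') := hmono_w hi3
    _ = Bv v (π⁻¹ i') := (heq i').symm
    _ ≤ T := by
        refine Finset.sum_le_sum_of_subset_of_nonneg ?_ fun k _ _ =>
          smul_nonneg (by positivity) (hv k)
        intro k hk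
        simp only [mem_filter, mem_univ, true_and] at hk ⊢
        exact lt_of_lt_of_le hi4 hk
  have hadd := add_le_add h1 h2
  have hre : (((j.1 : ℝ) + 1)⁻¹ • v j + T) + (((j.1 : ℝ) + 1)⁻¹ • w j + U)
      = (((j.1 : ℝ) + 1)⁻¹ • v j + ((j.1 : ℝ) + 1)⁻¹ • w j) + (T + U) := by abel
  rw [hre] at hadd
  have hadd' : (((j.1 : ℝ) + 1)⁻¹ • v j + ((j.1 : ℝ) + 1)⁻¹ • w j) + (T + U)
      ≤ 0 + (T + U) := by
    rw [zero_add]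
    exact hadd.trans_eq (add_comm U T)
  have hle0 := le_of_add_le_add_right hadd'
  have hvj : 0 ≤ ((j.1 : ℝ) + 1)⁻¹ • v j := smul_nonneg (by positivity) (hv j)
  have hwj : 0 ≤ ((j.1 : ℝ) + 1)⁻¹ • w j := smul_nonneg (by positivity) (hw j)
  have hzero : ((j.1 : ℝ) + 1)⁻¹ • v j = 0 := by
    refine le_antisymm ?_ hvj
    calc ((j.1 : ℝ) + 1)⁻¹ • v j ≤ _ + ((j.1 : ℝ) + 1)⁻¹ • w j := le_add_of_nonneg_right hwj
    _ ≤ 0 := hle0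
  exact inv_smul_zero (by positivity) hzero

lemma bary_eq (X : Fin N → Fin d → L0 P) {π πb : Equiv.Perm (Fin N)} {j : Fin N}
    (hj : (Iic j).image π = (Iic j).image πb) : L0.bary P X π j = L0.bary P X πb j := by
  unfold L0.bary
  congr 1
  have hfil : (univ.filter (· ≤ j) : Finset (Fin N)) = Iic j := by ext k; simp
  rw [hfil]
  calc ∑ a ∈ Iic j, X (π a) = ∑ x ∈ (Iic j).image π, X x :=
      (Finset.sum_image fun a _ b _ h => π.injective h).symm
  _ = ∑ x ∈ (Iic j).image πb, X x := by rw [hj]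
  _ = ∑ a ∈ Iic j, X (πb a) := Finset.sum_image fun a _ b _ h => πb.injective h

lemma perm_eq {N : ℕ} (π πb : Equiv.Perm (Fin N))
    (h : ∀ j : Fin N, (Iic j).image π = (Iic j).image πb) : π = πb := by
  have key : ∀ j : Fin N, πb.symm (π j) ≤ j := by
    intro j
    have hm : π j ∈ (Iic j).image πb := by
      rw [← h j]
      exact Finset.mem_image_of_mem π (Finset.mem_Iic.mpr le_rfl)
    obtain ⟨a, ha, haeq⟩ := Finset.mem_image.mp hm
    rw [← haeq, Equiv.symm_apply_apply]
    exact Finset.mem_Iic.mp ha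
  have hinj : Function.Injective fun k => πb.symm (π k) := fun a b hab =>
    π.injective (πb.symm.injective hab)
  have hfix : ∀ n : ℕ, ∀ j : Fin N, j.1 ≤ n → πb.symm (π j) = j := by
    intro n
    induction n with
    | zero =>
      intro j hj
      refine le_antisymm (key j) ?_
      rw [Fin.le_def]
      omega
    | succ n ih =>
      intro j hj
      rcases Nat.lt_or_ge j.1 (n+1) with hlt | hge
      · exact ih j (by omega)
      · rcases eq_or_lt_of_le (key j) with he | hl
        · exact he
        · exfalso
          have h1 : (πb.symm (π j)).1 ≤ n := by
            have := Fin.lt_def.mp hl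
            omega
          have h2 := ih (πb.symm (π j)) h1
          exact absurd (hinj h2) (ne_of_lt hl)
  refine Equiv.ext fun j => ?_
  have hj := hfix j.1 j le_rfl
  calc π j = πb (πb.symm (π j)) := (Equiv.apply_symm_apply πb (π j)).symm
  _ = πb j := by rw [hj]

end Stmt9

end Stmt9Aux

open MeasureTheory in
/-- intersection of two members of the barycentric subdivision. -/
theorem stmt_9 {Ω : Type*} [MeasurableSpace Ω] (P : Measure Ω) [IsProbabilityMeasure P]
    {d N : ℕ} (X : Fin N → Fin d → L0 P) (hX : L0.AffInd P X)
    (pi pib : Equiv.Perm (Fin N)) (J : Finset (Fin N))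
    (hJ : J = Finset.univ.filter fun j => (Finset.Iic j).image pi = (Finset.Iic j).image pib) :
    L0.conv P (L0.bary P X pi) ∩ L0.conv P (L0.bary P X pib)
        = L0.conv P (fun j : J => L0.bary P X pi j)
      ∧ L0.AffInd P (fun i : Fin J.card => L0.bary P X pi (J.orderIsoOfFin rfl i))
      ∧ (pi ≠ pib → J.card < N) := by
  classical
  have hmem : ∀ jj : Fin N, jj ∈ J ↔ (Finset.Iic jj).image pi = (Finset.Iic jj).image pib := by
    intro jj
    rw [hJ]
    simp
  have hauxX : Stmt9.AffIndAuxL X := Stmt9.aux_of_affInd X hX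
  have hN : N ≠ 0 := Stmt9.affInd_ne_zero X hX
  refine ⟨?_, ?_, ?_⟩
  · -- Part 1: the set equality
    ext Z
    simp only [Set.mem_inter_iff, L0.conv, Set.mem_setOf_eq]
    constructor
    · rintro ⟨⟨lam, hpos, hsum, hZ⟩, ⟨mu, hpos', hsum', hZ'⟩⟩
      have e1 : ∀ c, Z c = ∑ i, Stmt9.Bv lam (pi⁻¹ i) * X i c := by
        intro c
        rw [hZ]
        exact Stmt9.expandL X pi lam c
      have e2 : ∀ c, Z c = ∑ i, Stmt9.Bv mu (pib⁻¹ i) * X i c := by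
        intro c
        rw [hZ']
        exact Stmt9.expandL X pib mu c
      have h1 : ∀ c, ∑ i, (Stmt9.Bv lam (pi⁻¹ i) - Stmt9.Bv mu (pib⁻¹ i)) * X i c = 0 := by
        intro c
        rw [Stmt9.g_eq]
        have ge1 := congrArg AEEqFun.toGerm (e1 c)
        have ge2 := congrArg AEEqFun.toGerm (e2 c)
        simp only [Stmt9.g_sum, AEEqFun.mul_toGerm, Stmt9.Bv_germ] at ge1 ge2
        simp only [Stmt9.g_sum, AEEqFun.mul_toGerm, AEEqFun.sub_toGerm,
          AEEqFun.zero_toGerm, Stmt9.Bv_germ]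
        rw [Finset.sum_congr rfl fun i _ => sub_mul _ _ ((X i c).toGerm),
          Finset.sum_sub_distrib, ← ge1, ← ge2, sub_self]
      have h2 : ∑ i, (Stmt9.Bv lam (pi⁻¹ i) - Stmt9.Bv mu (pib⁻¹ i)) = 0 := by
        rw [Finset.sum_sub_distrib, Stmt9.Bv_total, Stmt9.Bv_total, hsum, hsum', sub_self]
      have hBeq : ∀ i, Stmt9.Bv lam (pi⁻¹ i) = Stmt9.Bv mu (pib⁻¹ i) := fun i =>
        sub_eq_zero.mp (hauxX _ h1 h2 i)
      have hzero : ∀ k : Fin N, k ∉ J → lam k = 0 := by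
        intro k hk
        have hne : (Finset.Iic k).image pi ≠ (Finset.Iic k).image pib := fun he => hk ((hmem k).mpr he)
        rw [Stmt9.g_eq, AEEqFun.zero_toGerm]
        refine Stmt9.orderG (fun k2 => (lam k2).toGerm) (fun k2 => (mu k2).toGerm)
          ?_ ?_ ?_ hne
        · intro k2
          have h' := Stmt9.g_le.mp (hpos k2)
          rwa [AEEqFun.zero_toGerm] at h'
        · intro k2
          have h' := Stmt9.g_le.mp (hpos' k2)
          rwa [AEEqFun.zero_toGerm] at h'
        · intro i
          have h' := congrArg AEEqFun.toGerm (hBeq i)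
          rwa [Stmt9.Bv_germ, Stmt9.Bv_germ] at h'
      refine ⟨fun j => lam j, fun j => hpos j, ?_, ?_⟩
      · rw [Finset.sum_coe_sort J (fun j => lam j),
          Finset.sum_subset (Finset.subset_univ J) (fun k _ hk => hzero k hk)]
        exact hsum
      · rw [hZ]
        calc ∑ k, lam k • L0.bary P X pi k
            = ∑ k ∈ J, lam k • L0.bary P X pi k :=
              (Finset.sum_subset (Finset.subset_univ J) fun k _ hk => by
                rw [hzero k hk]
                exact Stmt9.L0_zero_smul_vec _).symm
          _ = ∑ i : J, lam ↑i • L0.bary P X pi ↑i :=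
              (Finset.sum_coe_sort J fun k => lam k • L0.bary P X pi k).symm
    · rintro ⟨lam, hpos, hsum, hZ⟩
      set lamext : Fin N → L0 P := fun k => if h : k ∈ J then lam ⟨k, h⟩ else 0 with hlamext
      have hext0 : ∀ k ∉ J, lamext k = 0 := by
        intro k hk
        simp [hlamext, dif_neg hk]
      have hcoe : ∀ i : J, lamext ↑i = lam i := by
        intro i
        simp [hlamext, i.2]
      have hpos2 : ∀ k, 0 ≤ lamext k := by
        intro k
        by_cases h : k ∈ J
        · rw [show lamext k = lam ⟨k, h⟩ from by simp [hlamext, dif_pos h]]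
          exact hpos _
        · rw [hext0 k h]
      have hsum2 : ∑ k, lamext k = 1 := by
        rw [← Finset.sum_subset (Finset.subset_univ J) (fun k _ hk => hext0 k hk),
          ← Finset.sum_coe_sort J lamext,
          Finset.sum_congr rfl fun i _ => hcoe i]
        exact hsum
      have hZpi : Z = ∑ k, lamext k • L0.bary P X pi k := by
        rw [hZ]
        calc ∑ i : J, lam i • L0.bary P X pi ↑i
            = ∑ i : J, lamext ↑i • L0.bary P X pi ↑i :=
              Finset.sum_congr rfl fun i _ => by rw [hcoe i]
          _ = ∑ k ∈ J, lamext k • L0.bary P X pi k :=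
              Finset.sum_coe_sort J fun k => lamext k • L0.bary P X pi k
          _ = ∑ k, lamext k • L0.bary P X pi k :=
              Finset.sum_subset (Finset.subset_univ J) fun k _ hk => by
                rw [hext0 k hk]
                exact Stmt9.L0_zero_smul_vec _
      refine ⟨⟨lamext, hpos2, hsum2, hZpi⟩, ⟨lamext, hpos2, hsum2, ?_⟩⟩
      rw [hZpi]
      refine Finset.sum_congr rfl fun k _ => ?_
      by_cases hk : k ∈ J
      · rw [Stmt9.bary_eq X ((hmem k).mp hk)]
      · rw [hext0 k hk, Stmt9.L0_zero_smul_vec, Stmt9.L0_zero_smul_vec]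
  · -- Part 2: affine independence
    obtain ⟨n, rfl⟩ := Nat.exists_eq_succ_of_ne_zero hN
    have hlastJ : Fin.last n ∈ J := by
      rw [hmem]
      have hIic : Finset.Iic (Fin.last n) = Finset.univ := by
        ext k
        simp [Fin.le_last]
      rw [hIic, Finset.image_univ_equiv pi, Finset.image_univ_equiv pib]
    have hcard0 : J.card ≠ 0 := Finset.card_ne_zero_of_mem hlastJ
    have hf : Function.Injective
        (fun i : Fin J.card => ((J.orderIsoOfFin rfl i : J) : Fin (n + 1))) :=
      fun a b hab => (J.orderIsoOfFin rfl).injective (Subtype.ext hab)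
    exact Stmt9.affInd_of_aux _
      (Stmt9.aux_comp _ (Stmt9.aux_bary X hauxX pi) _ hf) hcard0
  · -- Part 3: cardinality
    intro hne
    have hJne : J ≠ Finset.univ := by
      intro he
      refine hne (Stmt9.perm_eq pi pib fun j => ?_)
      exact (hmem j).mp (he ▸ Finset.mem_univ j)
    have hss : J ⊂ Finset.univ := Finset.ssubset_iff_subset_ne.mpr ⟨Finset.subset_univ J, hJne⟩
    have := Finset.card_lt_card hss
    simpa using this
end

section
/- Let S = conv(X₁, …, X_N) be a conditional simplex in (L⁰)^d with barycentric subdivision (C_π)_{π ∈ S_N}, and for s ∈ {1, …, N−1} let B_s = conv(X₁, …, X_s). For a permutation π of {1, …, N}, the intersection C_π ∩ B_s is a conditional simplex of dimension s if and only if {π(1), …, π(s)} = {1, …, s}; in that case C_π ∩ B_s = conv(Y₁^π, …, Y_s^π), and the collection of all such s-dimensional intersections is exactly the barycentric subdivision of B_s. -/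
open MeasureTheory Filter

noncomputable section Toolkit
namespace L0Tool
variable {Ω : Type*} [MeasurableSpace Ω] {P : Measure Ω}


noncomputable instance : CommRing (L0 P) where
  __ := (inferInstance : AddCommGroup (L0 P))
  __ := (inferInstance : CommMonoid (L0 P))
  left_distrib a b c := by
    apply AEEqFun.ext
    filter_upwards [AEEqFun.coeFn_mul a (b+c), AEEqFun.coeFn_add b c,
      AEEqFun.coeFn_add (a*b) (a*c), AEEqFun.coeFn_mul a b, AEEqFun.coeFn_mul a c]
      with ω h1 h2 h3 h4 h5
    simp only [h1, h3, h4, h5, Pi.mul_apply, Pi.add_apply, h2]; ring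
  right_distrib a b c := by
    apply AEEqFun.ext
    filter_upwards [AEEqFun.coeFn_mul (a+b) c, AEEqFun.coeFn_add a b,
      AEEqFun.coeFn_add (a*c) (b*c), AEEqFun.coeFn_mul a c, AEEqFun.coeFn_mul b c]
      with ω h1 h2 h3 h4 h5
    simp only [h1, h3, h4, h5, Pi.mul_apply, Pi.add_apply, h2]; ring
  zero_mul a := by
    apply AEEqFun.ext
    filter_upwards [AEEqFun.coeFn_mul 0 a, AEEqFun.coeFn_zero (β := ℝ) (μ := P)] with ω h1 h2
    simp [h1, h2]
  mul_zero a := by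
    apply AEEqFun.ext
    filter_upwards [AEEqFun.coeFn_mul a 0, AEEqFun.coeFn_zero (β := ℝ) (μ := P)] with ω h1 h2
    simp [h1, h2]

noncomputable instance : IsOrderedAddMonoid (L0 P) where
  add_le_add_left a b hab c := by
    rw [← AEEqFun.coeFn_le] at hab ⊢
    filter_upwards [hab, AEEqFun.coeFn_add a c, AEEqFun.coeFn_add b c] with ω h1 h2 h3
    simp only [h2, h3, Pi.add_apply]
    linarith

lemma coeFn_finsetSum {ι : Type*} (s : Finset ι) (f : ι → L0 P) :
    ⇑(∑ i ∈ s, f i) =ᵐ[P] fun ω => ∑ i ∈ s, f i ω := by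
  classical
  induction s using Finset.induction_on with
  | empty => simp only [Finset.sum_empty]; exact AEEqFun.coeFn_zero (β := ℝ) (μ := P)
  | insert _ _ hx ih =>
    rename_i a s'
    rw [Finset.sum_insert hx]
    filter_upwards [AEEqFun.coeFn_add (f a) (∑ i ∈ s', f i), ih] with ω h1 h2
    simp only [h1, Pi.add_apply, h2, Finset.sum_insert hx]

lemma smul_mul_comm' (r : ℝ) (x y : L0 P) : (r • x) * y = r • (x * y) := by
  apply AEEqFun.ext
  filter_upwards [AEEqFun.coeFn_mul (r • x) y, AEEqFun.coeFn_smul r x,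
    AEEqFun.coeFn_smul r (x * y), AEEqFun.coeFn_mul x y] with ω h1 h2 h3 h4
  simp only [h1, h2, h3, h4, Pi.mul_apply, Pi.smul_apply, smul_eq_mul]; ring

instance : SMulCommClass ℝ (L0 P) (L0 P) := by
  constructor
  intro r x y
  show r • (x * y) = x * (r • y)
  apply AEEqFun.ext
  filter_upwards [AEEqFun.coeFn_smul r (x * y), AEEqFun.coeFn_mul x y,
    AEEqFun.coeFn_mul x (r • y), AEEqFun.coeFn_smul r y] with ω h1 h2 h3 h4
  simp only [h1, h2, h3, h4, Pi.mul_apply, Pi.smul_apply, smul_eq_mul]; ring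

instance : SMulCommClass (L0 P) ℝ (L0 P) := SMulCommClass.symm _ _ _

instance : IsScalarTower ℝ (L0 P) (L0 P) := by
  constructor
  intro r x y
  show (r • x) * y = r • (x * y)
  exact smul_mul_comm' r x y

lemma nonneg_iff {x : L0 P} : 0 ≤ x ↔ ∀ᵐ ω ∂P, 0 ≤ x ω := by
  rw [← AEEqFun.coeFn_le]
  constructor
  · intro h
    filter_upwards [h, AEEqFun.coeFn_zero (β := ℝ) (μ := P)] with ω h1 h2
    simp only [Pi.zero_apply] at h2
    rw [← h2]; exact h1
  · intro h
    filter_upwards [h, AEEqFun.coeFn_zero (β := ℝ) (μ := P)] with ω h1 h2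
    simp only [Pi.zero_apply] at h2
    rw [h2]; exact h1

lemma real_smul_nonneg {r : ℝ} (hr : 0 ≤ r) {x : L0 P} (hx : 0 ≤ x) : 0 ≤ r • x := by
  rw [nonneg_iff] at hx ⊢
  filter_upwards [hx, AEEqFun.coeFn_smul r x] with ω h1 h2
  rw [h2]; exact mul_nonneg hr h1

lemma real_smul_cancel {r : ℝ} (hr : r ≠ 0) {x : L0 P} (h : r • x = 0) : x = 0 := by
  have : r⁻¹ • (r • x) = x := by rw [smul_smul, inv_mul_cancel₀ hr, one_smul]
  rw [h, smul_zero] at this; exact this.symm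

lemma zero_ne_one' [IsProbabilityMeasure P] : (0 : L0 P) ≠ 1 := by
  intro h
  have h1 : ∀ᵐ ω ∂P, (0 : ℝ) = 1 := by
    filter_upwards [AEEqFun.coeFn_zero (β := ℝ) (μ := P), AEEqFun.coeFn_one (β := ℝ) (μ := P)]
      with ω h0 hone
    simp only [Pi.zero_apply] at h0
    simp only [Pi.one_apply] at hone
    rw [← h0, ← hone, h]
  have : (P : Measure Ω) ≠ 0 := IsProbabilityMeasure.ne_zero P
  have hne : (ae P).NeBot := ae_neBot.2 this
  obtain ⟨ω, hω⟩ := h1.exists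
  exact zero_ne_one hω

instance [IsProbabilityMeasure P] : Nontrivial (L0 P) := ⟨0, 1, zero_ne_one'⟩


section Calc
variable (P : Measure Ω)

/-- extension by zero -/
def ext0 {m N : ℕ} (h : m ≤ N) (lam : Fin m → L0 P) : Fin N → L0 P :=
  fun k => if hk : k.1 < m then lam ⟨k.1, hk⟩ else 0

lemma filter_lt_eq_map {m N : ℕ} (h : m ≤ N) :
    (Finset.univ.filter (fun k : Fin N => k.1 < m))
      = Finset.map (Fin.castLEEmb h) Finset.univ := by
  ext k
  rw [Finset.mem_filter]
  simp only [Finset.mem_univ, true_and]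
  constructor
  · intro hk
    exact Finset.mem_map.2 ⟨⟨k.1, hk⟩, Finset.mem_univ _, Fin.ext rfl⟩
  · intro hk
    obtain ⟨j, -, rfl⟩ := Finset.mem_map.1 hk
    exact j.2

lemma sum_ext0_smul {d m N : ℕ} (h : m ≤ N) (lam : Fin m → L0 P)
    (F : Fin N → Fin d → L0 P) :
    ∑ k, ext0 P h lam k • F k = ∑ j, lam j • F (Fin.castLE h j) := by
  classical
  rw [← Finset.sum_filter_add_sum_filter_not Finset.univ (fun k : Fin N => k.1 < m)]
  have h2 : ∑ k ∈ Finset.univ.filter (fun k : Fin N => ¬ k.1 < m), ext0 P h lam k • F k = 0 := by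
    refine Finset.sum_eq_zero fun k hk => ?_
    simp only [Finset.mem_filter] at hk
    rw [ext0, dif_neg hk.2, zero_smul]
  rw [h2, add_zero, filter_lt_eq_map h, Finset.sum_map]
  refine Finset.sum_congr rfl fun j _ => ?_
  have : ext0 P h lam (Fin.castLEEmb h j) = lam j := by
    rw [ext0, dif_pos (show ((Fin.castLEEmb h j : Fin N)).1 < m from j.2)]
    exact congrArg lam (Fin.ext rfl)
  rw [this]
  rfl

lemma sum_ext0 {m N : ℕ} (h : m ≤ N) (lam : Fin m → L0 P) :
    ∑ k, ext0 P h lam k = ∑ j, lam j := by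
  classical
  rw [← Finset.sum_filter_add_sum_filter_not Finset.univ (fun k : Fin N => k.1 < m)]
  have h2 : ∑ k ∈ Finset.univ.filter (fun k : Fin N => ¬ k.1 < m), ext0 P h lam k = 0 := by
    refine Finset.sum_eq_zero fun k hk => ?_
    simp only [Finset.mem_filter] at hk
    rw [ext0, dif_neg hk.2]
  rw [h2, add_zero, filter_lt_eq_map h, Finset.sum_map]
  refine Finset.sum_congr rfl fun j _ => ?_
  rw [ext0, dif_pos (show ((Fin.castLEEmb h j : Fin N)).1 < m from j.2)]
  exact congrArg lam (Fin.ext rfl)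

def coeff {N : ℕ} (μ : Fin N → L0 P) (i : Fin N) : L0 P :=
  ∑ k ∈ Finset.univ.filter (fun k => i ≤ k), ((k.1 + 1 : ℝ)⁻¹) • μ k

lemma bary_smul_sum {d N : ℕ} (X : Fin N → Fin d → L0 P) (π : Equiv.Perm (Fin N))
    (μ : Fin N → L0 P) :
    ∑ k, μ k • L0.bary P X π k = ∑ i, coeff P μ i • X (π i) := by
  unfold L0.bary coeff
  calc ∑ k, μ k • (((k.1+1:ℝ)⁻¹) • ∑ i ∈ Finset.univ.filter (· ≤ k), X (π i))
      = ∑ k, ∑ i ∈ Finset.univ.filter (· ≤ k), (((k.1+1:ℝ)⁻¹) • μ k) • X (π i) := by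
        refine Finset.sum_congr rfl fun k _ => ?_
        rw [smul_comm (μ k) ((k.1+1:ℝ)⁻¹) (∑ i ∈ Finset.univ.filter (· ≤ k), X (π i)),
          Finset.smul_sum, Finset.smul_sum]
        exact Finset.sum_congr rfl fun i _ =>
          (smul_assoc ((k.1+1:ℝ)⁻¹) (μ k) (X (π i))).symm
    _ = ∑ i, ∑ k ∈ Finset.univ.filter (fun k => i ≤ k), (((k.1+1:ℝ)⁻¹) • μ k) • X (π i) := by
        refine Finset.sum_comm' ?_
        intro k i
        simp only [Finset.mem_univ, Finset.mem_filter, true_and, and_true]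
    _ = ∑ i, (∑ k ∈ Finset.univ.filter (fun k => i ≤ k), ((k.1+1:ℝ)⁻¹) • μ k) • X (π i) := by
        exact Finset.sum_congr rfl fun i _ => (Finset.sum_smul).symm

lemma coeff_total {N : ℕ} (μ : Fin N → L0 P) :
    ∑ i, coeff P μ i = ∑ k, μ k := by
  unfold coeff
  rw [Finset.sum_comm' (t' := Finset.univ) (s' := fun k => Finset.univ.filter (fun i => i ≤ k))
    (fun i k => by simp only [Finset.mem_univ, Finset.mem_filter, true_and, and_true])]
  refine Finset.sum_congr rfl fun k _ => ?_
  rw [Finset.sum_const]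
  have hcard : (Finset.univ.filter (fun i : Fin N => i ≤ k)).card = k.1 + 1 := by
    have : (Finset.univ.filter (fun i : Fin N => i ≤ k))
        = Finset.univ.filter (fun i : Fin N => i.1 < k.1 + 1) := by
      ext i
      simp only [Finset.mem_filter, Finset.mem_univ, true_and]
      rw [Fin.le_def]
      omega
    rw [this, filter_lt_eq_map (Nat.succ_le_of_lt k.2), Finset.card_map, Finset.card_univ,
      Fintype.card_fin]
  rw [hcard, ← Nat.cast_smul_eq_nsmul ℝ, smul_smul]
  have hc1 : (((k.1 + 1 : ℕ)) : ℝ) * ((k.1 : ℝ) + 1)⁻¹ = 1 := by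
    push_cast
    rw [mul_inv_cancel₀ (by positivity)]
  rw [hc1, one_smul]

lemma coeff_nonneg {N : ℕ} {μ : Fin N → L0 P} (h : ∀ k, 0 ≤ μ k) (i : Fin N) :
    0 ≤ coeff P μ i :=
  Finset.sum_nonneg fun k _ => real_smul_nonneg (by positivity) (h k)

lemma tail_zero_of_coeff_zero {N : ℕ} {μ : Fin N → L0 P} (hnn : ∀ k, 0 ≤ μ k)
    {i0 : Fin N} (hc : coeff P μ i0 = 0) : ∀ k, i0 ≤ k → μ k = 0 := by
  intro k hk
  have h := (Finset.sum_eq_zero_iff_of_nonneg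
    (fun k _ => real_smul_nonneg (r := ((k.1+1:ℝ)⁻¹)) (by positivity) (hnn k))).1 hc
  have hmem : k ∈ Finset.univ.filter (fun j => i0 ≤ j) := by simp [hk]
  exact real_smul_cancel (by positivity) (h k hmem)

lemma coeff_zero_of_tail_zero {N : ℕ} {μ : Fin N → L0 P} {t : ℕ}
    (h : ∀ k : Fin N, t ≤ k.1 → μ k = 0) : ∀ i : Fin N, t ≤ i.1 → coeff P μ i = 0 := by
  intro i hi
  refine Finset.sum_eq_zero fun k hk => ?_
  simp only [Finset.mem_filter, Finset.mem_univ, true_and] at hk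
  rw [h k (le_trans hi hk), smul_zero]

lemma all_zero_of_coeff_zero {N : ℕ} {μ : Fin N → L0 P}
    (h : ∀ i, coeff P μ i = 0) : ∀ k, μ k = 0 := by
  have key : ∀ n : ℕ, ∀ k : Fin N, N - k.1 ≤ n → μ k = 0 := by
    intro n
    induction n with
    | zero => intro k hk; exact absurd k.2 (by omega)
    | succ n ih =>
      intro k hk
      have hsplit : Finset.univ.filter (fun j : Fin N => k ≤ j)
          = insert k (Finset.univ.filter (fun j : Fin N => k < j)) := by
        ext j
        simp only [Finset.mem_filter, Finset.mem_univ, true_and, Finset.mem_insert]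
        constructor
        · intro hj
          rcases eq_or_lt_of_le hj with h' | h'
          · exact Or.inl h'.symm
          · exact Or.inr h'
        · rintro (rfl | hj)
          · exact le_refl _
          · exact le_of_lt hj
      have htail : ∑ j ∈ Finset.univ.filter (fun j : Fin N => k < j),
          ((j.1+1:ℝ)⁻¹) • μ j = 0 := by
        refine Finset.sum_eq_zero fun j hj => ?_
        simp only [Finset.mem_filter, Finset.mem_univ, true_and] at hj
        have : μ j = 0 := ih j (by have hj' : k.1 < j.1 := Fin.lt_def.mp hj; omega)
        rw [this, smul_zero]
      have hc := h k
      rw [coeff, hsplit, Finset.sum_insert (by simp), htail, add_zero] at hc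
      exact real_smul_cancel (by positivity) hc
  intro k
  exact key (N - k.1) k le_rfl
end Calc


section Ind
variable (P : Measure Ω)

lemma zero_le_one' : (0 : L0 P) ≤ 1 := by
  rw [nonneg_iff]
  filter_upwards [AEEqFun.coeFn_one (β := ℝ) (μ := P)] with ω h1
  simp [h1]

lemma zero_of_affInd {d N : ℕ} {X : Fin N → Fin d → L0 P} (hX : L0.AffInd P X)
    (μ : Fin N → L0 P) (h0 : ∑ i, μ i = 0) (hrel : ∑ i, μ i • X i = 0) : ∀ i, μ i = 0 := by
  match N, X, hX with
  | 0, X, hX => exact hX.elim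
  | 1, X, _ =>
    intro i
    have h1 : μ 0 = 0 := by simpa using h0
    have : i = 0 := Subsingleton.elim i 0
    rw [this]; exact h1
  | (m+2), X, hX =>
    have key := hX (fun i => μ i.castSucc) ?_
    · intro i
      rcases Fin.eq_castSucc_or_eq_last i with ⟨j, rfl⟩ | rfl
      · exact key j
      · have hsum := h0
        rw [Fin.sum_univ_castSucc] at hsum
        have hz : ∑ i : Fin (m+1), μ i.castSucc = 0 := Finset.sum_eq_zero fun j _ => key j
        rw [hz, zero_add] at hsum; exact hsum
    · have e1 : ∑ i : Fin (m+1), μ i.castSucc • (X i.castSucc - X (Fin.last (m+1)))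
          = ∑ i : Fin (m+1), μ i.castSucc • X i.castSucc
            - (∑ i : Fin (m+1), μ i.castSucc) • X (Fin.last (m+1)) := by
        rw [Finset.sum_smul, ← Finset.sum_sub_distrib]
        exact Finset.sum_congr rfl fun i _ => smul_sub _ _ _
      have h0' : ∑ i : Fin (m+1), μ i.castSucc = - μ (Fin.last (m+1)) := by
        have := h0
        rw [Fin.sum_univ_castSucc] at this
        exact eq_neg_of_add_eq_zero_left this
      have hrel' : ∑ i : Fin (m+1), μ i.castSucc • X i.castSucc
          = - (μ (Fin.last (m+1)) • X (Fin.last (m+1))) := by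
        have := hrel
        rw [Fin.sum_univ_castSucc] at this
        have h2 := congrArg (fun Z => Z - μ (Fin.last (m+1)) • X (Fin.last (m+1))) this
        simp only [add_sub_cancel_right, zero_sub] at h2
        exact h2
      rw [e1, hrel', h0', neg_smul, sub_neg_eq_add, neg_add_cancel]

lemma affInd_of_zero {d N : ℕ} (hN : N ≠ 0) {X : Fin N → Fin d → L0 P}
    (h : ∀ μ : Fin N → L0 P, ∑ i, μ i = 0 → ∑ i, μ i • X i = 0 → ∀ i, μ i = 0) :
    L0.AffInd P X := by
  match N, X with
  | 1, X => trivial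
  | (m+2), X =>
    intro lam hrel i
    set μ : Fin (m+2) → L0 P :=
      fun j => if hj : j.1 < m+1 then lam ⟨j.1, hj⟩ else -∑ i, lam i with hμ
    have hcast : ∀ j : Fin (m+1), μ j.castSucc = lam j := by
      intro j
      rw [hμ]
      simp only
      rw [dif_pos (show (j.castSucc).1 < m+1 from j.2)]
      exact congrArg lam (Fin.ext rfl)
    have hlast : μ (Fin.last (m+1)) = -∑ i, lam i := by
      rw [hμ]; simp only
      rw [dif_neg (by simp)]
    have h0 : ∑ j, μ j = 0 := by
      rw [Fin.sum_univ_castSucc, hlast, Finset.sum_congr rfl fun j _ => hcast j]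
      exact add_neg_cancel _
    have hrel2 : ∑ j, μ j • X j = 0 := by
      rw [Fin.sum_univ_castSucc, hlast]
      have e1 : ∑ i : Fin (m+1), μ i.castSucc • X i.castSucc
          = ∑ i : Fin (m+1), lam i • X i.castSucc :=
        Finset.sum_congr rfl fun j _ => by rw [hcast]
      have e2 : ∑ i : Fin (m+1), lam i • (X i.castSucc - X (Fin.last (m+1)))
          = ∑ i : Fin (m+1), lam i • X i.castSucc
            - (∑ i : Fin (m+1), lam i) • X (Fin.last (m+1)) := by
        rw [Finset.sum_smul, ← Finset.sum_sub_distrib]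
        exact Finset.sum_congr rfl fun i _ => smul_sub _ _ _
      rw [e1, neg_smul, ← sub_eq_add_neg, ← e2, hrel]
    have := h μ h0 hrel2 i.castSucc
    rwa [hcast] at this

lemma unique_coeff {d N : ℕ} {X : Fin N → Fin d → L0 P}
    (hz : ∀ μ : Fin N → L0 P, ∑ i, μ i = 0 → ∑ i, μ i • X i = 0 → ∀ i, μ i = 0)
    {a b : Fin N → L0 P} (hab : ∑ i, a i = ∑ i, b i)
    (h : ∑ i, a i • X i = ∑ i, b i • X i) : ∀ i, a i = b i := by
  intro i
  have key := hz (fun j => a j - b j)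
    (by rw [Finset.sum_sub_distrib, hab, sub_self])
    (by
      have : ∑ j, (a j - b j) • X j = ∑ j, a j • X j - ∑ j, b j • X j := by
        rw [← Finset.sum_sub_distrib]
        exact Finset.sum_congr rfl fun j _ => sub_smul _ _ _
      rw [this, h, sub_self]) i
  exact sub_eq_zero.mp key

lemma mem_conv_self {d N : ℕ} (X : Fin N → Fin d → L0 P) (i : Fin N) :
    X i ∈ L0.conv P X := by
  classical
  refine ⟨fun j => if j = i then 1 else 0, ?_, ?_, ?_⟩
  · intro j
    dsimp only
    split
    · exact zero_le_one' P
    · exact le_refl 0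
  · simp
  · rw [Finset.sum_eq_single i]
    · dsimp only
      rw [if_pos rfl, one_smul]
    · intro j _ hj
      dsimp only
      rw [if_neg hj, zero_smul]
    · intro hi
      exact absurd (Finset.mem_univ i) hi

lemma conv_castLE_subset {d m N : ℕ} (h : m ≤ N) (F : Fin N → Fin d → L0 P) :
    L0.conv P (fun j : Fin m => F (Fin.castLE h j)) ⊆ L0.conv P F := by
  rintro Z ⟨lam, hnn, hsum, rfl⟩
  refine ⟨ext0 P h lam, ?_, ?_, ?_⟩
  · intro k
    rw [ext0]
    split
    · exact hnn _
    · exact le_refl 0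
  · rw [sum_ext0, hsum]
  · exact (sum_ext0_smul P h lam F).symm

end Ind


section Main
variable (P : Measure Ω)

lemma ext0_castLE {m N : ℕ} (h : m ≤ N) (lam : Fin m → L0 P) (j : Fin m) :
    ext0 P h lam (Fin.castLE h j) = lam j := by
  rw [ext0, dif_pos (show (Fin.castLE h j).1 < m from j.2)]
  exact congrArg lam (Fin.ext rfl)

lemma ext0_ge {m N : ℕ} (h : m ≤ N) (lam : Fin m → L0 P) (k : Fin N) (hk : m ≤ k.1) :
    ext0 P h lam k = 0 := by
  rw [ext0, dif_neg (not_lt.2 hk)]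

lemma ext0_nonneg {m N : ℕ} (h : m ≤ N) {lam : Fin m → L0 P} (hnn : ∀ j, 0 ≤ lam j)
    (k : Fin N) : 0 ≤ ext0 P h lam k := by
  rw [ext0]
  split
  · exact hnn _
  · exact le_refl 0

lemma bary_zero_form {d N : ℕ} {X : Fin N → Fin d → L0 P} (hX : L0.AffInd P X)
    (π : Equiv.Perm (Fin N)) {t : ℕ} (ht : t ≤ N)
    (μ : Fin t → L0 P) (h0 : ∑ j, μ j = 0)
    (hrel : ∑ j, μ j • L0.bary P X π (Fin.castLE ht j) = 0) : ∀ j, μ j = 0 := by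
  set μ' := ext0 P ht μ with hμ'
  have h0' : ∑ k, μ' k = 0 := by rw [hμ', sum_ext0]; exact h0
  have hrel' : ∑ i, coeff P μ' i • X (π i) = 0 := by
    rw [← bary_smul_sum, hμ', sum_ext0_smul]; exact hrel
  have hre : ∑ j, coeff P μ' (π.symm j) • X j = 0 := by
    rw [← Equiv.sum_comp π (fun j => coeff P μ' (π.symm j) • X j)]
    calc ∑ i, coeff P μ' (π.symm (π i)) • X (π i)
        = ∑ i, coeff P μ' i • X (π i) :=
          Finset.sum_congr rfl fun i _ => by rw [Equiv.symm_apply_apply]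
      _ = 0 := hrel'
  have hretot : ∑ j, coeff P μ' (π.symm j) = 0 := by
    rw [Equiv.sum_comp π.symm (coeff P μ'), coeff_total, h0']
  have hall := zero_of_affInd P hX (fun j => coeff P μ' (π.symm j)) hretot hre
  have hcoeff : ∀ i, coeff P μ' i = 0 := by
    intro i
    have := hall (π i)
    simp only [Equiv.symm_apply_apply] at this
    exact this
  have hz := all_zero_of_coeff_zero P hcoeff
  intro j
  have := hz (Fin.castLE ht j)
  rwa [hμ', ext0_castLE] at this

/-- The main intersection lemma. -/
lemma inter_lemma {d N s : ℕ} (hsN : s ≤ N) {X : Fin N → Fin d → L0 P}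
    (hX : L0.AffInd P X) (π : Equiv.Perm (Fin N)) {t : ℕ} (hts : t ≤ s) (htN : t ≤ N)
    (hsN' : s < N)
    (hgood : ∀ i : Fin N, i.1 < t → ((π i : Fin N) : ℕ) < s)
    (hbad : ∀ i : Fin N, i.1 = t → s ≤ ((π i : Fin N) : ℕ)) :
    L0.conv P (L0.bary P X π) ∩ L0.conv P (fun i : Fin s => X (Fin.castLE hsN i))
      = L0.conv P (fun k : Fin t => L0.bary P X π (Fin.castLE htN k)) := by
  have hXz : ∀ μ : Fin N → L0 P, ∑ i, μ i = 0 → ∑ i, μ i • X i = 0 → ∀ i, μ i = 0 :=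
    fun μ h0 hrel => zero_of_affInd P hX μ h0 hrel
  apply Set.eq_of_subset_of_subset
  · rintro Z ⟨⟨μ, hμnn, hμ1, hZμ⟩, ⟨ν, hνnn, hν1, hZν⟩⟩
    -- X-coordinates via both representations
    have h1 : Z = ∑ j, coeff P μ (π.symm j) • X j := by
      rw [hZμ, bary_smul_sum, ← Equiv.sum_comp π (fun j => coeff P μ (π.symm j) • X j)]
      exact Finset.sum_congr rfl fun i _ => by rw [Equiv.symm_apply_apply]
    have h2 : Z = ∑ j, ext0 P hsN ν j • X j := by
      rw [hZν, ← sum_ext0_smul P hsN ν X]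
    have hc1 : ∑ j, coeff P μ (π.symm j) = 1 := by
      rw [Equiv.sum_comp π.symm (coeff P μ), coeff_total, hμ1]
    have he1 : ∑ j, ext0 P hsN ν j = 1 := by rw [sum_ext0, hν1]
    have huniq := unique_coeff P hXz (hc1.trans he1.symm) (h1.symm.trans h2)
    set i0 : Fin N := ⟨t, lt_of_le_of_lt hts hsN'⟩ with hi0
    have hc0 : coeff P μ i0 = 0 := by
      have := huniq (π i0)
      rw [Equiv.symm_apply_apply, ext0_ge P hsN ν (π i0) (hbad i0 rfl)] at this
      exact this
    have hμtail := tail_zero_of_coeff_zero P hμnn hc0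
    have hext : μ = ext0 P htN (fun j : Fin t => μ (Fin.castLE htN j)) := by
      funext k
      rw [ext0]
      split
      · exact (congrArg μ (Fin.ext rfl)).symm
      · next hk =>
        exact hμtail k (by rw [Fin.le_def]; simpa [hi0] using not_lt.1 hk)
    refine ⟨fun j => μ (Fin.castLE htN j), fun j => hμnn _, ?_, ?_⟩
    · have hs := sum_ext0 P htN (fun j : Fin t => μ (Fin.castLE htN j))
      rw [← hext] at hs
      rw [← hs, hμ1]
    · calc Z = ∑ k, μ k • L0.bary P X π k := hZμ
        _ = ∑ k, ext0 P htN (fun j => μ (Fin.castLE htN j)) k • L0.bary P X π k := by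
            rw [← hext]
        _ = ∑ j, μ (Fin.castLE htN j) • L0.bary P X π (Fin.castLE htN j) :=
            sum_ext0_smul P htN _ _
  · rintro Z ⟨lam, hnn, h1, rfl⟩
    constructor
    · exact conv_castLE_subset P htN (L0.bary P X π) ⟨lam, hnn, h1, rfl⟩
    · set μ' := ext0 P htN lam with hμ'
      have hZ : (∑ j, lam j • L0.bary P X π (Fin.castLE htN j))
          = ∑ i, coeff P μ' i • X (π i) := by
        rw [← bary_smul_sum, hμ', sum_ext0_smul]
      have hμ'tail : ∀ k : Fin N, t ≤ k.1 → μ' k = 0 :=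
        fun k hk => ext0_ge P htN lam k hk
      have hcoefftail : ∀ i : Fin N, t ≤ i.1 → coeff P μ' i = 0 :=
        coeff_zero_of_tail_zero P hμ'tail
      have hμ'nn : ∀ k, 0 ≤ μ' k := ext0_nonneg P htN hnn
      have hfun : ∀ k : Fin N, ext0 P hsN
            (fun j : Fin s => coeff P μ' (π.symm (Fin.castLE hsN j))) k
          = coeff P μ' (π.symm k) := by
        intro k
        rw [ext0]
        split
        · exact congrArg (fun x => coeff P μ' (π.symm x)) (Fin.ext rfl)
        · next hk =>
          refine (hcoefftail (π.symm k) ?_).symm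
          by_contra hlt
          push_neg at hlt
          have := hgood (π.symm k) hlt
          rw [Equiv.apply_symm_apply] at this
          exact hk this
      refine ⟨fun j : Fin s => coeff P μ' (π.symm (Fin.castLE hsN j)), ?_, ?_, ?_⟩
      · intro j
        exact coeff_nonneg P hμ'nn _
      · have hs : ∑ k : Fin N, coeff P μ' (π.symm k)
            = ∑ j : Fin s, coeff P μ' (π.symm (Fin.castLE hsN j)) := by
          rw [← sum_ext0 P hsN (fun j : Fin s => coeff P μ' (π.symm (Fin.castLE hsN j)))]
          exact Finset.sum_congr rfl fun k _ => (hfun k).symm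
        rw [← hs, Equiv.sum_comp π.symm (coeff P μ'), coeff_total, hμ', sum_ext0, h1]
      · have hs : ∑ k : Fin N, coeff P μ' (π.symm k) • X k
            = ∑ j : Fin s, coeff P μ' (π.symm (Fin.castLE hsN j)) • X (Fin.castLE hsN j) := by
          rw [← sum_ext0_smul P hsN (fun j : Fin s => coeff P μ' (π.symm (Fin.castLE hsN j))) X]
          exact Finset.sum_congr rfl fun k _ => by rw [hfun k]
        calc (∑ j, lam j • L0.bary P X π (Fin.castLE htN j))
            = ∑ i, coeff P μ' i • X (π i) := hZ
          _ = ∑ k, coeff P μ' (π.symm k) • X k := by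
              rw [← Equiv.sum_comp π (fun k => coeff P μ' (π.symm k) • X k)]
              exact Finset.sum_congr rfl fun i _ => by rw [Equiv.symm_apply_apply]
          _ = ∑ j, coeff P μ' (π.symm (Fin.castLE hsN j)) • X (Fin.castLE hsN j) := hs

end Main


section Dim
variable (P : Measure Ω)

lemma conv_dim_le {d t s : ℕ} [IsProbabilityMeasure P]
    (W : Fin s → Fin d → L0 P) (V : Fin t → Fin d → L0 P)
    (hWz : ∀ μ : Fin s → L0 P, ∑ i, μ i = 0 → ∑ i, μ i • W i = 0 → ∀ i, μ i = 0)
    (hWV : ∀ j, W j ∈ L0.conv P V) (hVW : ∀ k, V k ∈ L0.conv P W) : s ≤ t := by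
  classical
  by_contra hlt
  push_neg at hlt
  choose lam hlnn hl1 hlrep using hWV
  choose rho hrnn hr1 hrrep using hVW
  have hcomp : ∀ j j' : Fin s,
      (∑ k, lam j k * rho k j') = (if j = j' then (1 : L0 P) else 0) := by
    intro j
    have hrepr : W j = ∑ j', (∑ k, lam j k * rho k j') • W j' := by
      calc W j = ∑ k, lam j k • V k := hlrep j
        _ = ∑ k, lam j k • ∑ j', rho k j' • W j' :=
            Finset.sum_congr rfl fun k _ => by rw [← hrrep k]
        _ = ∑ k, ∑ j', (lam j k * rho k j') • W j' := by
            refine Finset.sum_congr rfl fun k _ => ?_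
            rw [Finset.smul_sum]
            exact Finset.sum_congr rfl fun j' _ => (smul_smul _ _ _)
        _ = ∑ j', ∑ k, (lam j k * rho k j') • W j' := Finset.sum_comm
        _ = ∑ j', (∑ k, lam j k * rho k j') • W j' :=
            Finset.sum_congr rfl fun j' _ => (Finset.sum_smul).symm
    have hsum : ∑ j', (∑ k, lam j k * rho k j') = 1 := by
      calc ∑ j', ∑ k, lam j k * rho k j' = ∑ k, ∑ j', lam j k * rho k j' := Finset.sum_comm
        _ = ∑ k, lam j k * (∑ j', rho k j') :=
            Finset.sum_congr rfl fun k _ => (Finset.mul_sum _ _ _).symm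
        _ = ∑ k, lam j k := Finset.sum_congr rfl fun k _ => by rw [hr1 k, mul_one]
        _ = 1 := hl1 j
    have hid : W j = ∑ j', (if j = j' then (1 : L0 P) else 0) • W j' := by
      rw [Finset.sum_eq_single j]
      · rw [if_pos rfl, one_smul]
      · intro j' _ hj'
        rw [if_neg (Ne.symm hj'), zero_smul]
      · intro hj
        exact absurd (Finset.mem_univ j) hj
    have hsumid : ∑ j' : Fin s, (if j = j' then (1 : L0 P) else 0) = 1 := by simp
    exact unique_coeff P hWz (hsum.trans hsumid.symm) (hrepr.symm.trans hid)
  have hae : ∀ᵐ ω ∂P, ∀ j j' : Fin s,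
      ∑ k, (lam j k) ω * (rho k j') ω = (if j = j' then (1:ℝ) else 0) := by
    rw [MeasureTheory.ae_all_iff]
    intro j
    rw [MeasureTheory.ae_all_iff]
    intro j'
    have h := hcomp j j'
    have hsum := coeFn_finsetSum (P := P) Finset.univ (fun k => lam j k * rho k j')
    rw [h] at hsum
    have hmul : ∀ᵐ ω ∂P, ∀ k : Fin t, (lam j k * rho k j') ω = lam j k ω * rho k j' ω := by
      rw [MeasureTheory.ae_all_iff]
      intro k
      exact AEEqFun.coeFn_mul _ _
    by_cases hjj : j = j'
    · rw [if_pos hjj] at hsum ⊢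
      filter_upwards [hsum, hmul, AEEqFun.coeFn_one (β := ℝ) (μ := P)] with ω h1 h2 h3
      simp only [Pi.one_apply] at h3
      rw [← h3, h1]
      exact Finset.sum_congr rfl fun k _ => (h2 k).symm
    · rw [if_neg hjj] at hsum ⊢
      filter_upwards [hsum, hmul, AEEqFun.coeFn_zero (β := ℝ) (μ := P)] with ω h1 h2 h3
      simp only [Pi.zero_apply] at h3
      rw [← h3, h1]
      exact Finset.sum_congr rfl fun k _ => (h2 k).symm
  have hne : (MeasureTheory.ae P).NeBot := ae_neBot.2 (IsProbabilityMeasure.ne_zero P)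
  obtain ⟨ω, hω⟩ := hae.exists
  set A : Matrix (Fin s) (Fin t) ℝ := Matrix.of fun j k => lam j k ω with hA
  set B : Matrix (Fin t) (Fin s) ℝ := Matrix.of fun k j => rho k j ω with hB
  have hAB : A * B = 1 := by
    ext j j'
    rw [Matrix.mul_apply]
    simp only [hA, hB, Matrix.of_apply]
    rw [hω j j', Matrix.one_apply]
  have h1 : (1 : Matrix (Fin s) (Fin s) ℝ).rank = s := by
    rw [Matrix.rank_one, Fintype.card_fin]
  have h2 : (A * B).rank ≤ t := by
    refine le_trans (Matrix.rank_mul_le_left A B) ?_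
    simpa using Matrix.rank_le_card_width A
  rw [hAB, h1] at h2
  omega

end Dim


section Perm
variable (P : Measure Ω)

lemma image_eq_of_maps {N s : ℕ} (π : Equiv.Perm (Fin N))
    (hgood : ∀ i : Fin N, i.1 < s → ((π i : Fin N) : ℕ) < s) :
    Finset.image π (Finset.univ.filter fun i : Fin N => (i : ℕ) < s)
      = Finset.univ.filter fun i : Fin N => (i : ℕ) < s := by
  apply Finset.eq_of_subset_of_card_le
  · intro j hj
    obtain ⟨i, hi, rfl⟩ := Finset.mem_image.1 hj
    simp only [Finset.mem_filter, Finset.mem_univ, true_and] at hi ⊢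
    exact hgood i hi
  · rw [Finset.card_image_of_injective _ π.injective]

lemma maps_of_image_eq {N s : ℕ} (π : Equiv.Perm (Fin N))
    (h : Finset.image π (Finset.univ.filter fun i : Fin N => (i : ℕ) < s)
      = Finset.univ.filter fun i : Fin N => (i : ℕ) < s) :
    ∀ i : Fin N, i.1 < s → ((π i : Fin N) : ℕ) < s := by
  intro i hi
  have hmem : π i ∈ Finset.image π (Finset.univ.filter fun i : Fin N => (i : ℕ) < s) :=
    Finset.mem_image_of_mem _ (by simp [hi])
  rw [h] at hmem
  simpa using hmem

lemma bad_of_maps {N s : ℕ} (π : Equiv.Perm (Fin N))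
    (hgood : ∀ i : Fin N, i.1 < s → ((π i : Fin N) : ℕ) < s) :
    ∀ i : Fin N, ¬ (i.1 < s) → s ≤ ((π i : Fin N) : ℕ) := by
  intro i hi
  by_contra hlt
  push_neg at hlt
  have himg := image_eq_of_maps π hgood
  have hmem : π i ∈ Finset.image π (Finset.univ.filter fun i : Fin N => (i : ℕ) < s) := by
    rw [himg]; simp [hlt]
  obtain ⟨i', hi', he⟩ := Finset.mem_image.1 hmem
  have : i' = i := π.injective he
  subst this
  simp only [Finset.mem_filter, Finset.mem_univ, true_and] at hi'
  exact hi hi'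

lemma bary_compat {d N s : ℕ} (hsN : s ≤ N) (X : Fin N → Fin d → L0 P)
    (π : Equiv.Perm (Fin N)) (τ : Equiv.Perm (Fin s))
    (hcomp : ∀ k : Fin s, π (Fin.castLE hsN k) = Fin.castLE hsN (τ k)) (k : Fin s) :
    L0.bary P X π (Fin.castLE hsN k)
      = L0.bary P (fun i : Fin s => X (Fin.castLE hsN i)) τ k := by
  unfold L0.bary
  have hval : (((Fin.castLE hsN k).1 + 1 : ℝ))⁻¹ = ((k.1 + 1 : ℝ))⁻¹ := rfl
  rw [hval]
  congr 1
  have hfilter : Finset.univ.filter (fun i : Fin N => i ≤ Fin.castLE hsN k)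
      = Finset.map (Fin.castLEEmb hsN) (Finset.univ.filter (fun i : Fin s => i ≤ k)) := by
    ext i
    simp only [Finset.mem_filter, Finset.mem_univ, true_and]
    constructor
    · intro hi
      have hile : i.1 ≤ k.1 := hi
      have hilt : i.1 < s := lt_of_le_of_lt hile k.2
      refine Finset.mem_map.2 ⟨⟨i.1, hilt⟩, ?_, Fin.ext rfl⟩
      simp only [Finset.mem_filter, Finset.mem_univ, true_and]
      exact hile
    · intro hi
      obtain ⟨j, hj, rfl⟩ := Finset.mem_map.1 hi
      simp only [Finset.mem_filter, Finset.mem_univ, true_and] at hj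
      exact hj
  rw [hfilter, Finset.sum_map]
  refine Finset.sum_congr rfl fun j _ => ?_
  have h1 : (Fin.castLEEmb hsN) j = Fin.castLE hsN j := rfl
  rw [h1, hcomp j]

/-- Extend a permutation of `Fin s` to `Fin N` by the identity. -/
def extPerm {N s : ℕ} (hsN : s ≤ N) (τ : Equiv.Perm (Fin s)) : Equiv.Perm (Fin N) where
  toFun i := if h : i.1 < s then Fin.castLE hsN (τ ⟨i.1, h⟩) else i
  invFun i := if h : i.1 < s then Fin.castLE hsN (τ.symm ⟨i.1, h⟩) else i
  left_inv i := by
    dsimp only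
    by_cases h : i.1 < s
    · rw [dif_pos h]
      have h2 : ((Fin.castLE hsN (τ ⟨i.1, h⟩)).1 < s) := (τ ⟨i.1, h⟩).2
      rw [dif_pos h2]
      have h3 : (⟨(Fin.castLE hsN (τ ⟨i.1, h⟩)).1, h2⟩ : Fin s) = τ ⟨i.1, h⟩ := Fin.ext rfl
      rw [h3, Equiv.symm_apply_apply]
      exact Fin.ext rfl
    · rw [dif_neg h, dif_neg h]
  right_inv i := by
    dsimp only
    by_cases h : i.1 < s
    · rw [dif_pos h]
      have h2 : ((Fin.castLE hsN (τ.symm ⟨i.1, h⟩)).1 < s) := (τ.symm ⟨i.1, h⟩).2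
      rw [dif_pos h2]
      have h3 : (⟨(Fin.castLE hsN (τ.symm ⟨i.1, h⟩)).1, h2⟩ : Fin s) = τ.symm ⟨i.1, h⟩ :=
        Fin.ext rfl
      rw [h3, Equiv.apply_symm_apply]
      exact Fin.ext rfl
    · rw [dif_neg h, dif_neg h]

lemma extPerm_comp {N s : ℕ} (hsN : s ≤ N) (τ : Equiv.Perm (Fin s)) (k : Fin s) :
    extPerm hsN τ (Fin.castLE hsN k) = Fin.castLE hsN (τ k) := by
  show (if h : (Fin.castLE hsN k).1 < s then Fin.castLE hsN (τ ⟨(Fin.castLE hsN k).1, h⟩)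
    else Fin.castLE hsN k) = Fin.castLE hsN (τ k)
  rw [dif_pos (show (Fin.castLE hsN k).1 < s from k.2)]
  have : (⟨(Fin.castLE hsN k).1, k.2⟩ : Fin s) = k := Fin.ext rfl
  rw [this]

lemma extPerm_good {N s : ℕ} (hsN : s ≤ N) (τ : Equiv.Perm (Fin s)) :
    ∀ i : Fin N, i.1 < s → ((extPerm hsN τ i : Fin N) : ℕ) < s := by
  intro i hi
  show ((if h : i.1 < s then Fin.castLE hsN (τ ⟨i.1, h⟩) else i) : Fin N).1 < s
  rw [dif_pos hi]
  exact (τ ⟨i.1, hi⟩).2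

end Perm

end L0Tool
end Toolkit


open MeasureTheory in
/-- the `s`-dimensional intersections `C_π ∩ B_s` are exactly those with
`{π(1),…,π(s)} = {1,…,s}`, they equal `conv(Y₁^π,…,Y_s^π)`, and together they form the
barycentric subdivision of `B_s`. -/
theorem stmt_10 {Ω : Type*} [MeasurableSpace Ω] (P : Measure Ω) [IsProbabilityMeasure P]
    {d N s : ℕ} (hs1 : 1 ≤ s) (hsN : s ≤ N - 1) (hN : 1 < N)
    (X : Fin N → Fin d → L0 P) (hX : L0.AffInd P X)
    (Bs : Set (Fin d → L0 P))
    (hBs : Bs = L0.conv P (fun i : Fin s => X (Fin.castLE (by omega) i))) :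
    (∀ π : Equiv.Perm (Fin N),
      (∃ W : Fin s → Fin d → L0 P, L0.AffInd P W ∧
          L0.conv P (L0.bary P X π) ∩ Bs = L0.conv P W)
        ↔ Finset.image π (Finset.univ.filter fun i : Fin N => (i : ℕ) < s)
            = Finset.univ.filter fun i : Fin N => (i : ℕ) < s)
    ∧ (∀ π : Equiv.Perm (Fin N),
        Finset.image π (Finset.univ.filter fun i : Fin N => (i : ℕ) < s)
            = (Finset.univ.filter fun i : Fin N => (i : ℕ) < s) →
        L0.conv P (L0.bary P X π) ∩ Bs
          = L0.conv P (fun k : Fin s => L0.bary P X π (Fin.castLE (by omega) k)))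
    ∧ ({T | ∃ π : Equiv.Perm (Fin N),
          Finset.image π (Finset.univ.filter fun i : Fin N => (i : ℕ) < s)
              = (Finset.univ.filter fun i : Fin N => (i : ℕ) < s)
            ∧ T = L0.conv P (L0.bary P X π) ∩ Bs}
        = {T | ∃ τ : Equiv.Perm (Fin s),
            T = L0.conv P (L0.bary P (fun i : Fin s => X (Fin.castLE (by omega) i)) τ)}) := by
  classical
  have hsN : s ≤ N := by omega
  have hsN' : s < N := by omega
  have key2 : ∀ π : Equiv.Perm (Fin N),
      Finset.image π (Finset.univ.filter fun i : Fin N => (i : ℕ) < s)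
        = (Finset.univ.filter fun i : Fin N => (i : ℕ) < s) →
      L0.conv P (L0.bary P X π) ∩ Bs
        = L0.conv P (fun k : Fin s => L0.bary P X π (Fin.castLE hsN k)) := by
    intro π himg
    have hgood := L0Tool.maps_of_image_eq π himg
    have hbad : ∀ i : Fin N, i.1 = s → s ≤ ((π i : Fin N) : ℕ) :=
      fun i hi => L0Tool.bad_of_maps π hgood i (by omega)
    rw [hBs]
    exact L0Tool.inter_lemma P hsN hX π le_rfl hsN hsN' hgood hbad
  have keyW : ∀ π : Equiv.Perm (Fin N),
      L0.AffInd P (fun k : Fin s => L0.bary P X π (Fin.castLE hsN k)) :=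
    fun π => L0Tool.affInd_of_zero P (by omega)
      (fun μ h0 hrel => L0Tool.bary_zero_form P hX π hsN μ h0 hrel)
  refine ⟨?_, ?_, ?_⟩
  · intro π
    constructor
    · rintro ⟨W, hWind, hint⟩
      by_contra himg
      have hngood : ¬ ∀ i : Fin N, i.1 < s → ((π i : Fin N) : ℕ) < s :=
        fun h => himg (L0Tool.image_eq_of_maps π h)
      push_neg at hngood
      obtain ⟨i1, hi1s, hbad1⟩ := hngood
      have hQ : ∃ n, ∃ h : n < N, s ≤ ((π ⟨n, h⟩ : Fin N) : ℕ) :=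
        ⟨i1.1, i1.2, by simpa [Fin.eta] using hbad1⟩
      obtain ⟨htN', htbad⟩ := Nat.find_spec hQ
      have htlt : Nat.find hQ < s :=
        lt_of_le_of_lt (Nat.find_le ⟨i1.2, by simpa [Fin.eta] using hbad1⟩) hi1s
      have hgood : ∀ i : Fin N, i.1 < Nat.find hQ → ((π i : Fin N) : ℕ) < s := by
        intro i hi
        by_contra hge
        push_neg at hge
        exact Nat.find_min hQ hi ⟨i.2, by simpa [Fin.eta] using hge⟩
      have hbad : ∀ i : Fin N, i.1 = Nat.find hQ → s ≤ ((π i : Fin N) : ℕ) := by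
        intro i hi
        have hieq : i = ⟨Nat.find hQ, htN'⟩ := Fin.ext hi
        rw [hieq]
        exact htbad
      have htN : Nat.find hQ ≤ N := le_of_lt htN'
      have hint2 := L0Tool.inter_lemma P hsN hX π (le_of_lt htlt) htN hsN' hgood hbad
      rw [hBs] at hint
      have hiff : L0.conv P W
          = L0.conv P (fun k : Fin (Nat.find hQ) => L0.bary P X π (Fin.castLE htN k)) :=
        hint.symm.trans hint2
      have hWz : ∀ μ : Fin s → L0 P, ∑ i, μ i = 0 → ∑ i, μ i • W i = 0 → ∀ i, μ i = 0 :=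
        fun μ h0 hrel => L0Tool.zero_of_affInd P hWind μ h0 hrel
      have hle := L0Tool.conv_dim_le P W
        (fun k : Fin (Nat.find hQ) => L0.bary P X π (Fin.castLE htN k)) hWz
        (fun j => by rw [← hiff]; exact L0Tool.mem_conv_self P W j)
        (fun k => by rw [hiff]; exact L0Tool.mem_conv_self P _ k)
      omega
    · intro himg
      exact ⟨_, keyW π, key2 π himg⟩
  · exact key2
  · ext T
    simp only [Set.mem_setOf_eq]
    constructor
    · rintro ⟨π, himg, rfl⟩
      have hgood := L0Tool.maps_of_image_eq π himg
      have hf2 : ∀ k : Fin s, ((π (Fin.castLE hsN k) : Fin N) : ℕ) < s :=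
        fun k => hgood _ k.2
      obtain ⟨τ, hτ⟩ : ∃ τ : Equiv.Perm (Fin s),
          ∀ k, π (Fin.castLE hsN k) = Fin.castLE hsN (τ k) := by
        have hinj : Function.Injective
            (fun k : Fin s => (⟨((π (Fin.castLE hsN k) : Fin N)).1, hf2 k⟩ : Fin s)) := by
          intro a b hab
          have h0 := congrArg Fin.val hab
          simp only [Fin.val_mk] at h0
          have h1 : π (Fin.castLE hsN a) = π (Fin.castLE hsN b) := Fin.ext h0
          have h2 := π.injective h1
          have h3 := congrArg Fin.val h2
          simp only [Fin.castLE] at h3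
          exact Fin.ext h3
        exact ⟨Equiv.ofBijective _ ((Finite.injective_iff_bijective).1 hinj),
          fun k => Fin.ext rfl⟩
      refine ⟨τ, ?_⟩
      rw [key2 π himg]
      have he := funext (fun k => L0Tool.bary_compat P hsN X π τ hτ k)
      rw [he]
    · rintro ⟨τ, rfl⟩
      have hgood := L0Tool.extPerm_good hsN τ
      have himg := L0Tool.image_eq_of_maps (L0Tool.extPerm hsN τ) hgood
      refine ⟨L0Tool.extPerm hsN τ, himg, ?_⟩
      rw [key2 _ himg]
      have he := funext (fun k => L0Tool.bary_compat P hsN X (L0Tool.extPerm hsN τ) τ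
        (L0Tool.extPerm_comp hsN τ) k)
      rw [he]
end

section
/- Let S = conv(X₁, …, X_N) be a conditional simplex in (L⁰)^d with barycentric subdivision (C_π)_{π ∈ S_N}. Then for every permutation π of {1, …, N}: diam(C_π) ≤ esssup_{i,j = 1,…,N} ‖Yᵢ^π − Yⱼ^π‖ ≤ ((N−1)/N) · diam(S) P-almost surely. -/
open MeasureTheory Filter

section StmtAux

open MeasureTheory Filter

namespace StmtAux

variable {Ω : Type*} [MeasurableSpace Ω] (P : Measure Ω)

lemma vecA {E : Type*} [SeminormedAddCommGroup E] [NormedSpace ℝ E] {ι : Type*} [Fintype ι]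
    (l m : ι → ℝ) (y : ι → E) (M : ℝ)
    (hl : ∀ i, 0 ≤ l i) (hm : ∀ i, 0 ≤ m i)
    (hl1 : ∑ i, l i = 1) (hm1 : ∑ i, m i = 1)
    (hM : ∀ i j, ‖y i - y j‖ ≤ M) :
    ‖(∑ i, l i • y i) - ∑ j, m j • y j‖ ≤ M := by
  have h1 : ∑ i : ι, ∑ j : ι, (l i * m j) • y i = ∑ i, l i • y i := by
    refine Finset.sum_congr rfl fun i _ => ?_
    rw [← Finset.sum_smul, ← Finset.mul_sum, hm1, mul_one]
  have h2 : ∑ i : ι, ∑ j : ι, (l i * m j) • y j = ∑ j, m j • y j := by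
    rw [Finset.sum_comm]
    refine Finset.sum_congr rfl fun j _ => ?_
    rw [← Finset.sum_smul, ← Finset.sum_mul, hl1, one_mul]
  have key : (∑ i, l i • y i) - ∑ j, m j • y j
      = ∑ i : ι, ∑ j : ι, (l i * m j) • (y i - y j) := by
    simp only [smul_sub, Finset.sum_sub_distrib, h1, h2]
  rw [key]
  calc ‖∑ i : ι, ∑ j : ι, (l i * m j) • (y i - y j)‖
      ≤ ∑ i : ι, ∑ j : ι, ‖(l i * m j) • (y i - y j)‖ :=
        (norm_sum_le _ _).trans (Finset.sum_le_sum fun i _ => norm_sum_le _ _)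
    _ ≤ ∑ i : ι, ∑ j : ι, l i * m j * M := by
        refine Finset.sum_le_sum fun i _ => Finset.sum_le_sum fun j _ => ?_
        rw [norm_smul, Real.norm_eq_abs, abs_of_nonneg (mul_nonneg (hl i) (hm j))]
        exact mul_le_mul_of_nonneg_left (hM i j) (mul_nonneg (hl i) (hm j))
    _ = M := by
        simp only [mul_assoc, ← Finset.mul_sum, ← Finset.sum_mul, hl1, hm1]
        ring

lemma vecB {E : Type*} [SeminormedAddCommGroup E] [NormedSpace ℝ E] {N : ℕ} (x : Fin N → E)
    (i j : Fin N) (hij : i ≤ j) (D : ℝ) (hD : 0 ≤ D) (y : Fin N → E)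
    (hy : ∀ k : Fin N,
      y k = ((k.1 + 1 : ℝ))⁻¹ • ∑ l ∈ Finset.univ.filter (· ≤ k), x l)
    (hb : ∀ a : Fin N, ‖x a - y i‖ ≤ D) :
    ‖y i - y j‖ ≤ ((N - 1 : ℝ) / N) * D := by
  set Si := Finset.univ.filter (· ≤ i) with hSi
  set Sj := Finset.univ.filter (· ≤ j) with hSj
  have hfilt : ∀ k : Fin N, Finset.univ.filter (· ≤ k) = Finset.Iic k := by
    intro k; ext; simp
  have cardSi : Si.card = i.1 + 1 := by rw [hSi, hfilt, Fin.card_Iic]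
  have cardSj : Sj.card = j.1 + 1 := by rw [hSj, hfilt, Fin.card_Iic]
  have hsub : Si ⊆ Sj := by
    intro a ha
    simp only [hSi, hSj, Finset.mem_filter, Finset.mem_univ, true_and] at ha ⊢
    exact ha.trans hij
  have hcj : (0:ℝ) < (j.1 + 1 : ℝ) := by positivity
  have hci : (0:ℝ) < (i.1 + 1 : ℝ) := by positivity
  have hsmuli : ((i.1 + 1 : ℝ)) • y i = ∑ l ∈ Si, x l := by
    rw [hy i, smul_inv_smul₀ hci.ne']
  have hsmulj : ((j.1 + 1 : ℝ)) • y j = ∑ l ∈ Sj, x l := by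
    rw [hy j, smul_inv_smul₀ hcj.ne']
  have e2 : ∑ l ∈ Si, (x l - y i) = 0 := by
    rw [Finset.sum_sub_distrib, Finset.sum_const, cardSi, ← hsmuli]
    rw [← Nat.cast_smul_eq_nsmul ℝ]
    push_cast
    rw [sub_self]
  have e1 : ∑ l ∈ Sj, (x l - y i) = ((j.1 + 1 : ℝ)) • (y j - y i) := by
    rw [Finset.sum_sub_distrib, Finset.sum_const, cardSj, ← hsmulj,
      ← Nat.cast_smul_eq_nsmul ℝ, smul_sub]
    push_cast
    ring_nf
  have e3 : ∑ l ∈ Sj \ Si, (x l - y i) = ((j.1 + 1 : ℝ)) • (y j - y i) := by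
    rw [← e1, ← Finset.sum_sdiff hsub, e2, add_zero]
  have e4 : y j - y i = ((j.1 + 1 : ℝ))⁻¹ • ∑ l ∈ Sj \ Si, (x l - y i) := by
    rw [e3, inv_smul_smul₀ hcj.ne']
  have cardd : ((Sj \ Si).card : ℝ) = (j.1 : ℝ) - i.1 := by
    rw [Finset.card_sdiff_of_subset hsub, cardSi, cardSj]
    rw [Nat.succ_sub_succ, Nat.cast_sub (by exact_mod_cast hij)]
  have hnorm : ‖y j - y i‖ ≤ ((j.1 + 1 : ℝ))⁻¹ * (((j.1:ℝ) - i.1) * D) := by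
    rw [e4, norm_smul, Real.norm_eq_abs, abs_of_pos (inv_pos.2 hcj)]
    refine mul_le_mul_of_nonneg_left ?_ (inv_pos.2 hcj).le
    calc ‖∑ l ∈ Sj \ Si, (x l - y i)‖ ≤ ∑ l ∈ Sj \ Si, ‖x l - y i‖ := norm_sum_le _ _
      _ ≤ ∑ _l ∈ Sj \ Si, D := Finset.sum_le_sum fun l _ => hb l
      _ = ((Sj \ Si).card : ℝ) * D := by rw [Finset.sum_const, nsmul_eq_mul]
      _ = ((j.1:ℝ) - i.1) * D := by rw [cardd]
  have hNpos : (0:ℝ) < N := by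
    exact_mod_cast j.1.zero_le.trans_lt j.2
  have frac : ((j.1 + 1 : ℝ))⁻¹ * ((j.1:ℝ) - i.1) ≤ ((N:ℝ) - 1) / N := by
    rw [inv_mul_eq_div, div_le_div_iff₀ hcj hNpos]
    have hj1 : (j.1 : ℝ) + 1 ≤ N := by exact_mod_cast j.2
    have hi0 : (0:ℝ) ≤ i.1 := by positivity
    nlinarith
  calc ‖y i - y j‖ = ‖y j - y i‖ := norm_sub_rev _ _
    _ ≤ ((j.1 + 1 : ℝ))⁻¹ * (((j.1:ℝ) - i.1) * D) := hnorm
    _ = (((j.1 + 1 : ℝ))⁻¹ * ((j.1:ℝ) - i.1)) * D := by ring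
    _ ≤ (((N:ℝ) - 1) / N) * D := mul_le_mul_of_nonneg_right frac hD

/-- `coeFn` of a finite sum in `L⁰`. -/
lemma coeFn_sum {ι : Type*} (s : Finset ι) (f : ι → L0 P) :
    ⇑(∑ i ∈ s, f i) =ᵐ[P] fun ω => ∑ i ∈ s, f i ω := by
  induction s using Finset.cons_induction with
  | empty => simp only [Finset.sum_empty]; exact AEEqFun.coeFn_zero
  | cons a s ha ih =>
    simp only [Finset.sum_cons]
    filter_upwards [AEEqFun.coeFn_add (f a) (∑ i ∈ s, f i), ih] with ω h1 h2
    simp [h1, h2]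

/-- The linear identification of `Fin d → ℝ` with `EuclideanSpace ℝ (Fin d)`. -/
noncomputable def LE (d : ℕ) : (Fin d → ℝ) ≃ₗ[ℝ] EuclideanSpace ℝ (Fin d) :=
  (WithLp.linearEquiv 2 ℝ (Fin d → ℝ)).symm

lemma norm_LE {d : ℕ} (v : Fin d → ℝ) : ‖LE d v‖ = Real.sqrt (∑ k, v k * v k) := by
  rw [LE, WithLp.linearEquiv_symm_apply, EuclideanSpace.norm_eq]
  simp [Real.norm_eq_abs, sq_abs, sq]

lemma norm_ae {d : ℕ} (Z : Fin d → L0 P) :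
    ⇑(L0.norm P Z) =ᵐ[P] fun ω => ‖LE d (fun k => Z k ω)‖ := by
  have h1 : ⇑(L0.inner P Z Z) =ᵐ[P] fun ω => ∑ k, Z k ω * Z k ω := by
    filter_upwards [coeFn_sum P Finset.univ (fun k => Z k * Z k),
      ae_all_iff.2 fun k : Fin d => AEEqFun.coeFn_mul (Z k) (Z k)] with ω h2 h3
    rw [L0.inner, h2]
    exact Finset.sum_congr rfl fun k _ => h3 k
  filter_upwards [AEEqFun.coeFn_comp Real.sqrt Real.continuous_sqrt (L0.inner P Z Z), h1]
    with ω h2 h3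
  rw [L0.norm, h2, Function.comp_apply, h3, norm_LE]

lemma norm_sub_ae {d : ℕ} (A B : Fin d → L0 P) :
    ⇑(L0.norm P (A - B)) =ᵐ[P]
      fun ω => ‖LE d (fun k => A k ω) - LE d (fun k => B k ω)‖ := by
  filter_upwards [norm_ae P (A - B),
    ae_all_iff.2 fun k : Fin d => AEEqFun.coeFn_sub (A k) (B k)] with ω h1 h2
  rw [h1, ← map_sub]
  congr 2
  funext k
  exact h2 k

lemma le_of_ae {f g : L0 P} (h : ∀ᵐ ω ∂P, f ω ≤ g ω) : f ≤ g :=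
  AEEqFun.coeFn_le.1 h

lemma ae_of_le {f g : L0 P} (h : f ≤ g) : ∀ᵐ ω ∂P, f ω ≤ g ω :=
  AEEqFun.coeFn_le.2 h

lemma zero_mul' (f : L0 P) : (0 : L0 P) * f = 0 := by
  refine AEEqFun.ext ?_
  filter_upwards [AEEqFun.coeFn_mul (0 : L0 P) f, AEEqFun.coeFn_zero (μ := P) (β := ℝ)]
    with ω h1 h2
  simp [h1, h2]

lemma one_smul_mul (r : ℝ) (f : L0 P) : (r • (1 : L0 P)) * f = r • f := by
  refine AEEqFun.ext ?_
  filter_upwards [AEEqFun.coeFn_mul (r • (1 : L0 P)) f,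
    AEEqFun.coeFn_smul r (1 : L0 P), AEEqFun.coeFn_smul r f, AEEqFun.coeFn_one (μ := P) (β := ℝ)]
    with ω h1 h2 h3 h4
  simp only [h1, Pi.mul_apply, h2, h3, Pi.smul_apply, h4, Pi.one_apply, smul_eq_mul, mul_one]

/-- Every vertex belongs to the convex hull. -/
lemma vertex_mem {d N : ℕ} (X : Fin N → Fin d → L0 P) (a : Fin N) : X a ∈ L0.conv P X := by
  classical
  refine ⟨fun i => if i = a then (1 : L0 P) else 0, fun i => ?_, ?_, ?_⟩
  · dsimp only
    by_cases h : i = a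
    · simp only [h, if_true]
      refine le_of_ae P ?_
      filter_upwards [AEEqFun.coeFn_zero (μ := P) (β := ℝ), AEEqFun.coeFn_one (μ := P) (β := ℝ)]
        with ω h1 h2
      rw [h1, h2]; norm_num
    · simp only [h, if_false]
      exact le_rfl
  · simp [Finset.sum_ite_eq']
  · funext k
    rw [Finset.sum_apply]
    have : ∀ i : Fin N, ((if i = a then (1:L0 P) else 0) • X i) k
        = if i = a then X i k else 0 := by
      intro i
      by_cases h : i = a
      · simp only [h, if_true]
        show (1 : L0 P) * X a k = X a k
        exact one_mul _
      · simp only [h, if_false]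
        show (0 : L0 P) * X i k = 0
        exact zero_mul' P _
    simp only [this, Finset.sum_ite_eq', Finset.mem_univ, if_true]

/-- Each barycentric vertex belongs to the convex hull of the original vertices. -/
lemma bary_mem {d N : ℕ} (X : Fin N → Fin d → L0 P) (π : Equiv.Perm (Fin N)) (k : Fin N) :
    L0.bary P X π k ∈ L0.conv P X := by
  classical
  set c : ℝ := (k.1 + 1 : ℝ) with hc
  have hcpos : (0:ℝ) < c := by rw [hc]; positivity
  set S := Finset.univ.filter (· ≤ k) with hS
  have cardS : S.card = k.1 + 1 := by
    have : S = Finset.Iic k := by ext; simp [hS]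
    rw [this, Fin.card_Iic]
  set T := S.image π with hT
  have cardT : T.card = k.1 + 1 := by
    rw [hT, Finset.card_image_of_injective _ π.injective, cardS]
  refine ⟨fun j => if j ∈ T then (c⁻¹ • (1 : L0 P)) else 0, fun j => ?_, ?_, ?_⟩
  · dsimp only
    by_cases hj : j ∈ T
    · simp only [hj, if_true]
      refine le_of_ae P ?_
      filter_upwards [AEEqFun.coeFn_zero (μ := P) (β := ℝ),
        AEEqFun.coeFn_smul c⁻¹ (1 : L0 P), AEEqFun.coeFn_one (μ := P) (β := ℝ)]
        with ω h1 h2 h3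
      rw [h1, h2]
      simp only [Pi.smul_apply, Pi.zero_apply, h3, Pi.one_apply, smul_eq_mul, mul_one]
      exact inv_nonneg.2 hcpos.le
    · simp only [hj, if_false]
      exact le_rfl
  · rw [Finset.sum_ite_mem, Finset.univ_inter, Finset.sum_const, cardT,
      ← Nat.cast_smul_eq_nsmul ℝ, smul_smul]
    push_cast
    rw [← hc, mul_inv_cancel₀ hcpos.ne', one_smul]
  · funext kk
    rw [Finset.sum_apply]
    have h1 : ∀ j : Fin N, ((if j ∈ T then (c⁻¹ • (1 : L0 P)) else 0) • X j) kk
        = if j ∈ T then c⁻¹ • X j kk else 0 := by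
      intro j
      by_cases hj : j ∈ T
      · simp only [hj, if_true]
        show (c⁻¹ • (1 : L0 P)) * X j kk = c⁻¹ • X j kk
        exact one_smul_mul P _ _
      · simp only [hj, if_false]
        show (0 : L0 P) * X j kk = 0
        exact zero_mul' P _
    simp only [h1, Finset.sum_ite_mem, Finset.univ_inter]
    rw [← Finset.smul_sum]
    show L0.bary P X π k kk = _
    rw [L0.bary, Pi.smul_apply, Finset.sum_apply, ← hc, ← hS]
    congr 1
    rw [hT, Finset.sum_image (fun a _ b _ h => π.injective h)]

lemma bary_coe_ae {d N : ℕ} (X : Fin N → Fin d → L0 P) (π : Equiv.Perm (Fin N)) :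
    ∀ᵐ ω ∂P, ∀ (k : Fin N) (kk : Fin d),
      L0.bary P X π k kk ω
        = (k.1 + 1 : ℝ)⁻¹ * ∑ l ∈ Finset.univ.filter (· ≤ k), X (π l) kk ω := by
  rw [ae_all_iff]
  intro k
  rw [ae_all_iff]
  intro kk
  have h0 : L0.bary P X π k kk
      = (k.1 + 1 : ℝ)⁻¹ • ((∑ i ∈ Finset.univ.filter (· ≤ k), X (π i)) kk) := rfl
  filter_upwards [AEEqFun.coeFn_smul ((k.1 + 1 : ℝ))⁻¹
      ((∑ i ∈ Finset.univ.filter (· ≤ k), X (π i)) kk),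
    coeFn_sum P (Finset.univ.filter (· ≤ k)) (fun i => X (π i) kk)] with ω h1 h2
  rw [h0, h1, Pi.smul_apply, smul_eq_mul]
  congr 1
  have h3 : (∑ i ∈ Finset.univ.filter (· ≤ k), X (π i)) kk
      = ∑ i ∈ Finset.univ.filter (· ≤ k), X (π i) kk := by rw [Finset.sum_apply]
  rw [h3]
  exact h2

end StmtAux

end StmtAux

open MeasureTheory in
/-- diameter estimate for the barycentric subdivision:
`diam(C_π) ≤ esssup_{i,j} ‖Yᵢ^π − Yⱼ^π‖ ≤ ((N−1)/N)·diam(S)`. -/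
theorem stmt_11 {Ω : Type*} [MeasurableSpace Ω] (P : Measure Ω) [IsProbabilityMeasure P]
    {d N : ℕ} (X : Fin N → Fin d → L0 P) (hX : L0.AffInd P X)
    (π : Equiv.Perm (Fin N)) (DS DC M : L0 P)
    (hDS : L0.IsEssSup P
      {e | ∃ Z ∈ L0.conv P X, ∃ W ∈ L0.conv P X, e = L0.norm P (Z - W)} DS)
    (hDC : L0.IsEssSup P
      {e | ∃ Z ∈ L0.conv P (L0.bary P X π), ∃ W ∈ L0.conv P (L0.bary P X π),
        e = L0.norm P (Z - W)} DC)
    (hM : L0.IsEssSup P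
      {e | ∃ i j : Fin N, e = L0.norm P (L0.bary P X π i - L0.bary P X π j)} M) :
    DC ≤ M ∧ M ≤ ((N - 1 : ℝ) / N) • DS := by
  classical
  have hN : 0 < N := by
    rcases Nat.eq_zero_or_pos N with h | h
    · subst h; exact hX.elim
    · exact h
  set i0 : Fin N := ⟨0, hN⟩
  have hDSnn : ∀ᵐ ω ∂P, 0 ≤ DS ω := by
    have h := StmtAux.ae_of_le P
      (hDS.1 _ ⟨X i0, StmtAux.vertex_mem P X i0, X i0, StmtAux.vertex_mem P X i0, rfl⟩)
    filter_upwards [h, StmtAux.norm_sub_ae P (X i0) (X i0)] with ω h1 h2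
    rw [h2] at h1
    simpa using le_trans (norm_nonneg _) h1
  have hMb : ∀ᵐ ω ∂P, ∀ i j : Fin N,
      ‖StmtAux.LE d (fun kk => L0.bary P X π i kk ω)
        - StmtAux.LE d (fun kk => L0.bary P X π j kk ω)‖ ≤ M ω := by
    rw [ae_all_iff]; intro i; rw [ae_all_iff]; intro j
    have h := StmtAux.ae_of_le P (hM.1 _ ⟨i, j, rfl⟩)
    filter_upwards [h, StmtAux.norm_sub_ae P (L0.bary P X π i) (L0.bary P X π j)] with ω h1 h2
    rw [← h2]; exact h1
  have coord : ∀ (lam : Fin N → L0 P) (Z : Fin d → L0 P),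
      Z = ∑ i, lam i • L0.bary P X π i →
      ∀ᵐ ω ∂P, ∀ kk : Fin d, Z kk ω = ∑ i, lam i ω * L0.bary P X π i kk ω := by
    intro lam Z hZeq
    rw [ae_all_iff]; intro kk
    have hco : Z kk = ∑ i, lam i * L0.bary P X π i kk := by
      rw [hZeq, Finset.sum_apply]; rfl
    filter_upwards [StmtAux.coeFn_sum P Finset.univ (fun i => lam i * L0.bary P X π i kk),
      ae_all_iff.2 fun i : Fin N => AEEqFun.coeFn_mul (lam i) (L0.bary P X π i kk)]
      with ω h1 h2
    rw [hco, h1]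
    exact Finset.sum_congr rfl fun i _ => h2 i
  have nonneg : ∀ lam : Fin N → L0 P, (∀ i, 0 ≤ lam i) → ∀ᵐ ω ∂P, ∀ i, 0 ≤ lam i ω := by
    intro lam hl
    rw [ae_all_iff]; intro i
    filter_upwards [StmtAux.ae_of_le P (hl i), AEEqFun.coeFn_zero (μ := P) (β := ℝ)]
      with ω h1 h2
    rw [h2] at h1
    simpa using h1
  have sumone : ∀ lam : Fin N → L0 P, (∑ i, lam i) = 1 → ∀ᵐ ω ∂P, ∑ i, lam i ω = 1 := by
    intro lam hl
    filter_upwards [StmtAux.coeFn_sum P Finset.univ lam, AEEqFun.coeFn_one (μ := P) (β := ℝ)]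
      with ω h1 h2
    have h3 : (∑ i, lam i : L0 P) ω = (1 : L0 P) ω := by rw [hl]
    rw [← h1, h3, h2, Pi.one_apply]
  constructor
  · refine hDC.2 M ?_
    rintro e ⟨Z, ⟨lam, hl0, hl1, hZeq⟩, W, ⟨mu, hm0, hm1, hWeq⟩, rfl⟩
    refine StmtAux.le_of_ae P ?_
    filter_upwards [hMb, coord lam Z hZeq, coord mu W hWeq, nonneg lam hl0, nonneg mu hm0,
      sumone lam hl1, sumone mu hm1, StmtAux.norm_sub_ae P Z W]
      with ω h1 h2 h3 h4 h5 h6 h7 h8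
    rw [h8]
    have hZv : StmtAux.LE d (fun kk => Z kk ω)
        = ∑ i, lam i ω • StmtAux.LE d (fun kk => L0.bary P X π i kk ω) := by
      have he : (fun kk => Z kk ω)
          = ∑ i, lam i ω • (fun kk => L0.bary P X π i kk ω) := by
        funext kk
        rw [h2 kk]
        simp [Finset.sum_apply]
      rw [he, map_sum]
      exact Finset.sum_congr rfl fun x _ => _root_.map_smul _ _ _
    have hWv : StmtAux.LE d (fun kk => W kk ω)
        = ∑ i, mu i ω • StmtAux.LE d (fun kk => L0.bary P X π i kk ω) := by
      have he : (fun kk => W kk ω)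
          = ∑ i, mu i ω • (fun kk => L0.bary P X π i kk ω) := by
        funext kk
        rw [h3 kk]
        simp [Finset.sum_apply]
      rw [he, map_sum]
      exact Finset.sum_congr rfl fun x _ => _root_.map_smul _ _ _
    rw [hZv, hWv]
    exact StmtAux.vecA (fun i => lam i ω) (fun i => mu i ω) _ (M ω) h4 h5 h6 h7 h1
  · refine hM.2 _ ?_
    rintro e ⟨i, j, rfl⟩
    have hDSb : ∀ᵐ ω ∂P, ∀ a k : Fin N,
        ‖StmtAux.LE d (fun kk => X (π a) kk ω)
          - StmtAux.LE d (fun kk => L0.bary P X π k kk ω)‖ ≤ DS ω := by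
      rw [ae_all_iff]; intro a; rw [ae_all_iff]; intro k
      have h := StmtAux.ae_of_le P (hDS.1 _ ⟨X (π a), StmtAux.vertex_mem P X (π a),
        L0.bary P X π k, StmtAux.bary_mem P X π k, rfl⟩)
      filter_upwards [h, StmtAux.norm_sub_ae P (X (π a)) (L0.bary P X π k)] with ω h1 h2
      rw [← h2]; exact h1
    have key : ∀ i j : Fin N, i ≤ j →
        L0.norm P (L0.bary P X π i - L0.bary P X π j) ≤ ((N - 1 : ℝ) / N) • DS := by
      intro i j hij
      refine StmtAux.le_of_ae P ?_
      filter_upwards [hDSb, StmtAux.bary_coe_ae P X π, hDSnn,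
        StmtAux.norm_sub_ae P (L0.bary P X π i) (L0.bary P X π j),
        AEEqFun.coeFn_smul ((N - 1 : ℝ) / N) DS] with ω h1 h2 h3 h4 h5
      rw [h4, h5]
      simp only [Pi.smul_apply, smul_eq_mul]
      refine StmtAux.vecB (fun a => StmtAux.LE d (fun kk => X (π a) kk ω)) i j hij (DS ω) h3
        (fun k => StmtAux.LE d (fun kk => L0.bary P X π k kk ω)) ?_ ?_
      · intro k
        have he : (fun kk => L0.bary P X π k kk ω)
            = ((k.1 + 1 : ℝ))⁻¹ • ∑ l ∈ Finset.univ.filter (· ≤ k),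
                (fun kk => X (π l) kk ω) := by
          funext kk
          rw [h2 k kk]
          simp [Finset.sum_apply]
        rw [he, _root_.map_smul, map_sum]
      · intro a
        exact h1 a i
    rcases le_total i j with hij | hij
    · exact key i j hij
    · have hsymm : L0.norm P (L0.bary P X π i - L0.bary P X π j)
          = L0.norm P (L0.bary P X π j - L0.bary P X π i) := by
        refine AEEqFun.ext ?_
        filter_upwards [StmtAux.norm_sub_ae P (L0.bary P X π i) (L0.bary P X π j),
          StmtAux.norm_sub_ae P (L0.bary P X π j) (L0.bary P X π i)] with ω h1 h2
        rw [h1, h2, norm_sub_rev]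
      rw [hsymm]
      exact key j i hij
end

section
/- Let S = conv(X₁, …, X_N) be a conditional simplex in (L⁰)^d, D ⊆ S a σ-stable subset, and f : S → S a local function. For X ∈ D write X = Σᵢ₌₁ᴺ λᵢ Xᵢ and f(X) = Σᵢ₌₁ᴺ μᵢ Xᵢ (the coefficients λᵢ, μᵢ ∈ L⁰₊ with Σλᵢ = Σμᵢ = 1 being unique). Then: (1) every local function φ : D → {0, …, N}(𝒜) satisfying, for every X ∈ D, (i) P({φ(X) = i} ⊆ {λᵢ > 0} ∩ {λᵢ ≥ μᵢ}) = 1 for i = 1, …, N and (ii) P(⋃ᵢ₌₁ᴺ ({λᵢ > 0} ∩ {λᵢ ≥ μᵢ}) ⊆ ⋃ᵢ₌₁ᴺ {φ(X) = i}) = 1, in fact takes values in {1, …, N}(𝒜) and satisfies P({φ(X) = i} ⊆ {λᵢ > 0}) = 1 for all i (i.e., φ is a proper labeling function); (2) such a local function φ exists. -/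
open MeasureTheory Filter

/-! ### Auxiliary development for Statement 12 -/

namespace SB12

open MeasureTheory Filter

variable {Ω : Type*} [MeasurableSpace Ω] {P : Measure Ω}

theorem coeFn_sum {ι : Type*} (s : Finset ι) (f : ι → L0 P) :
    ⇑(∑ i ∈ s, f i) =ᵐ[P] fun ω => ∑ i ∈ s, f i ω := by
  classical
  induction s using Finset.induction with
  | empty => simp only [Finset.sum_empty]; exact AEEqFun.coeFn_zero
  | @insert a s h ih =>
    rw [Finset.sum_insert h]
    filter_upwards [AEEqFun.coeFn_add (f a) (∑ i ∈ s, f i), ih] with ω h1 h2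
    simp only [h1, Pi.add_apply, h2, Finset.sum_insert h]

theorem coeFn_sum_mul {N : ℕ} (f g : Fin N → L0 P) :
    ⇑(∑ i, f i * g i) =ᵐ[P] fun ω => ∑ i, f i ω * g i ω := by
  filter_upwards [coeFn_sum Finset.univ (fun i => f i * g i),
    ae_all_iff.2 fun i => AEEqFun.coeFn_mul (f i) (g i)] with ω h1 h2
  rw [h1]; exact Finset.sum_congr rfl fun i _ => h2 i

theorem coeFn_glue (e a b : L0 P) :
    ⇑(e * a + (1 - e) * b) =ᵐ[P] fun ω => e ω * a ω + (1 - e ω) * b ω := by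
  filter_upwards [AEEqFun.coeFn_add (e * a) ((1 - e) * b), AEEqFun.coeFn_mul e a,
    AEEqFun.coeFn_mul (1 - e) b, AEEqFun.coeFn_sub (1 : L0 P) e,
    (AEEqFun.coeFn_one : ⇑(1 : L0 P) =ᵐ[P] _)] with ω h1 h2 h3 h4 h5
  rw [h1]
  simp only [Pi.add_apply]
  rw [h2, h3]
  simp only [Pi.mul_apply]
  rw [h4]
  simp only [Pi.sub_apply]
  rw [h5]
  simp only [Pi.one_apply]

theorem sum_one_ae {N : ℕ} {lam : Fin N → L0 P} (h : (∑ i, lam i) = 1) :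
    ∀ᵐ ω ∂P, ∑ i, lam i ω = 1 := by
  filter_upwards [coeFn_sum Finset.univ lam, (AEEqFun.coeFn_one : ⇑(1 : L0 P) =ᵐ[P] _)]
    with ω h1 h2
  rw [← h1, h]; exact h2

theorem sum_zero_ae {N : ℕ} {lam : Fin N → L0 P} (h : (∑ i, lam i) = 0) :
    ∀ᵐ ω ∂P, ∑ i, lam i ω = 0 := by
  filter_upwards [coeFn_sum Finset.univ lam, (AEEqFun.coeFn_zero : ⇑(0 : L0 P) =ᵐ[P] _)]
    with ω h1 h2
  rw [← h1, h]; exact h2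

theorem nonneg_ae {N : ℕ} {lam : Fin N → L0 P} (h : ∀ i, 0 ≤ lam i) :
    ∀ᵐ ω ∂P, ∀ i, 0 ≤ lam i ω := by
  rw [ae_all_iff]
  intro i
  filter_upwards [AEEqFun.coeFn_le.2 (h i), (AEEqFun.coeFn_zero : ⇑(0 : L0 P) =ᵐ[P] _)]
    with ω h1 h2
  calc (0:ℝ) = (0 : L0 P) ω := h2.symm
    _ ≤ lam i ω := h1

theorem sum_smul_apply {d N : ℕ} (lam : Fin N → L0 P) (X : Fin N → Fin d → L0 P) (k : Fin d) :
    (∑ i, lam i • X i) k = ∑ i, lam i * X i k := by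
  rw [Finset.sum_apply k Finset.univ _]; rfl

theorem combo_ae {d N : ℕ} {X : Fin N → Fin d → L0 P} {lam : Fin N → L0 P} {Z : Fin d → L0 P}
    (h : Z = ∑ i, lam i • X i) (k : Fin d) :
    ∀ᵐ ω ∂P, Z k ω = ∑ i, lam i ω * X i k ω := by
  have hk : Z k = ∑ i, lam i * X i k := by rw [h]; exact sum_smul_apply lam X k
  rw [hk]; exact coeFn_sum_mul _ _

theorem combo_zero_ae {d N : ℕ} {X : Fin N → Fin d → L0 P} {lam : Fin N → L0 P}
    (h : (∑ i, lam i • X i) = 0) (k : Fin d) :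
    ∀ᵐ ω ∂P, ∑ i, lam i ω * X i k ω = 0 := by
  have hk : (∑ i, lam i * X i k) = 0 := by rw [← sum_smul_apply lam X k, h]; rfl
  filter_upwards [coeFn_sum_mul lam (fun i => X i k),
    (AEEqFun.coeFn_zero : ⇑(0 : L0 P) =ᵐ[P] _)] with ω h1 h2
  rw [← h1, hk]; exact h2

theorem ind_coe {A : Set Ω} (hA : MeasurableSet A) :
    ⇑(L0.ind P A) =ᵐ[P] A.indicator (fun _ => (1:ℝ)) := by
  simp only [L0.ind, dif_pos hA]
  exact AEEqFun.coeFn_mk _ _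

theorem ind_mul_eq_iff {A : Set Ω} (hA : MeasurableSet A) (u v : L0 P) :
    L0.ind P A * u = L0.ind P A * v ↔ ∀ᵐ ω ∂P, ω ∈ A → u ω = v ω := by
  constructor
  · intro h
    have h' : ⇑(L0.ind P A * u) =ᵐ[P] ⇑(L0.ind P A * v) := by rw [h]
    filter_upwards [h', AEEqFun.coeFn_mul (L0.ind P A) u, AEEqFun.coeFn_mul (L0.ind P A) v,
      ind_coe (P := P) hA] with ω h1 h2 h3 h4 hωA
    rw [h2, h3] at h1
    simp only [Pi.mul_apply, h4, Set.indicator_of_mem hωA, one_mul] at h1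
    exact h1
  · intro h
    apply AEEqFun.ext
    filter_upwards [h, AEEqFun.coeFn_mul (L0.ind P A) u, AEEqFun.coeFn_mul (L0.ind P A) v,
      ind_coe (P := P) hA] with ω h1 h2 h3 h4
    rw [h2, h3]
    simp only [Pi.mul_apply, h4]
    by_cases hω : ω ∈ A
    · simp [Set.indicator_of_mem hω, h1 hω]
    · simp [Set.indicator_of_notMem hω]

theorem exists_good {N : ℕ} (lamv muv : Fin N → ℝ) (hl0 : ∀ i, 0 ≤ lamv i)
    (hl1 : ∑ i, lamv i = 1) (hm0 : ∀ i, 0 ≤ muv i) (hm1 : ∑ i, muv i = 1) :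
    ∃ i, 0 < lamv i ∧ muv i ≤ lamv i := by
  by_contra h
  push_neg at h
  have hle : ∀ i, lamv i ≤ muv i := by
    intro i
    rcases (hl0 i).lt_or_eq with hp | hz
    · exact (h i hp).le
    · rw [← hz]; exact hm0 i
  have hex : ∃ i, 0 < lamv i := by
    by_contra h2
    push_neg at h2
    have : ∑ i, lamv i = 0 := Finset.sum_eq_zero fun i _ => le_antisymm (h2 i) (hl0 i)
    rw [hl1] at this; norm_num at this
  obtain ⟨i0, hi0⟩ := hex
  have : ∑ i, lamv i < ∑ i, muv i :=
    Finset.sum_lt_sum (fun i _ => hle i) ⟨i0, Finset.mem_univ _, h i0 hi0⟩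
  rw [hl1, hm1] at this
  exact lt_irrefl _ this

theorem affind_zero {d N : ℕ} {X : Fin N → Fin d → L0 P} (hX : L0.AffInd P X)
    (δ : Fin N → L0 P) (h0 : (∑ i, δ i) = 0) (hc : (∑ i, δ i • X i) = 0) : ∀ i, δ i = 0 := by
  match N, X, hX with
  | 0, X, hX => exact hX.elim
  | 1, X, _ =>
    intro i
    have hi : i = 0 := Subsingleton.elim _ _
    subst hi
    simpa [Fin.sum_univ_one] using h0
  | (m+2), X, hX =>
    have key : (∑ i : Fin (m+1), δ i.castSucc • (X i.castSucc - X (Fin.last (m + 1)))) = 0 := by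
      funext k
      simp only [Pi.zero_apply]
      apply AEEqFun.ext
      have e1 : (∑ i : Fin (m+1), δ i.castSucc • (X i.castSucc - X (Fin.last (m+1)))) k
          = ∑ i : Fin (m+1), δ i.castSucc * (X i.castSucc k - X (Fin.last (m+1)) k) := by
        rw [Finset.sum_apply k Finset.univ _]; rfl
      filter_upwards [coeFn_sum_mul (fun i : Fin (m+1) => δ i.castSucc)
          (fun i => X i.castSucc k - X (Fin.last (m+1)) k),
        ae_all_iff.2 fun i : Fin (m+1) =>
          AEEqFun.coeFn_sub (X i.castSucc k) (X (Fin.last (m+1)) k),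
        sum_zero_ae h0, combo_zero_ae hc k,
        (AEEqFun.coeFn_zero : ⇑(0 : L0 P) =ᵐ[P] _)] with ω h1 h2 h3 h4 h5
      rw [e1, h1, h5]
      have h2' : ∀ i : Fin (m+1),
          (X i.castSucc k - X (Fin.last (m+1)) k) ω = X i.castSucc k ω - X (Fin.last (m+1)) k ω :=
        fun i => h2 i
      rw [Fin.sum_univ_castSucc] at h3 h4
      calc ∑ i : Fin (m+1), δ i.castSucc ω * (X i.castSucc k - X (Fin.last (m+1)) k) ω
          = ∑ i : Fin (m+1), δ i.castSucc ω * (X i.castSucc k ω - X (Fin.last (m+1)) k ω) :=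
            Finset.sum_congr rfl fun i _ => by rw [h2' i]
        _ = (∑ i : Fin (m+1), δ i.castSucc ω * X i.castSucc k ω)
            - (∑ i : Fin (m+1), δ i.castSucc ω) * X (Fin.last (m+1)) k ω := by
            rw [Finset.sum_mul, ← Finset.sum_sub_distrib]
            exact Finset.sum_congr rfl fun i _ => by ring
        _ = (0:Ω → ℝ) ω := by
            show _ = (0:ℝ)
            linear_combination h4 - X (Fin.last (m+1)) k ω * h3
    have hz := hX (fun i => δ i.castSucc) key
    intro i
    induction i using Fin.lastCases with
    | last =>
      rw [Fin.sum_univ_castSucc] at h0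
      have : (∑ i : Fin (m+1), δ i.castSucc) = 0 := Finset.sum_eq_zero fun i _ => hz i
      rw [this, zero_add] at h0
      exact h0
    | cast i => exact hz i

theorem uniq {d N : ℕ} {X : Fin N → Fin d → L0 P} (hX : L0.AffInd P X)
    (lam lam' : Fin N → L0 P) (h1 : (∑ i, lam i) = 1) (h1' : (∑ i, lam' i) = 1)
    (heq : (∑ i, lam i • X i) = ∑ i, lam' i • X i) : lam = lam' := by
  have h0 : (∑ i, (lam i - lam' i)) = 0 := by
    rw [Finset.sum_sub_distrib, h1, h1', sub_self]
  have hc : (∑ i, (lam i - lam' i) • X i) = 0 := by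
    funext k
    simp only [Pi.zero_apply]
    apply AEEqFun.ext
    have e1 : (∑ i, (lam i - lam' i) • X i) k = ∑ i, (lam i - lam' i) * X i k :=
      sum_smul_apply _ X k
    have heqk : (∑ i, lam i * X i k) = ∑ i, lam' i * X i k := by
      rw [← sum_smul_apply lam X k, ← sum_smul_apply lam' X k, heq]
    have heqk' : ⇑(∑ i, lam i * X i k) =ᵐ[P] ⇑(∑ i, lam' i * X i k) := by rw [heqk]
    filter_upwards [coeFn_sum_mul (fun i => lam i - lam' i) (fun i => X i k),
      ae_all_iff.2 fun i => AEEqFun.coeFn_sub (lam i) (lam' i),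
      coeFn_sum_mul lam (fun i => X i k), coeFn_sum_mul lam' (fun i => X i k), heqk',
      (AEEqFun.coeFn_zero : ⇑(0 : L0 P) =ᵐ[P] _)] with ω h1 h2 h3 h4 h5 h6
    rw [e1, h1, h6]
    show _ = (0:ℝ)
    calc ∑ i, (lam i - lam' i) ω * X i k ω
        = ∑ i, (lam i ω - lam' i ω) * X i k ω :=
          Finset.sum_congr rfl fun i _ => by rw [h2 i]; rfl
      _ = (∑ i, lam i ω * X i k ω) - ∑ i, lam' i ω * X i k ω := by
          rw [← Finset.sum_sub_distrib]; exact Finset.sum_congr rfl fun i _ => by ring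
      _ = 0 := by rw [← h3, ← h4, h5, sub_self]
  have hz := affind_zero hX _ h0 hc
  funext i
  exact sub_eq_zero.1 (hz i)

open Classical in
noncomputable def selAux {N : ℕ} (L M : Fin N → Ω → ℝ) : List (Fin N) → Ω → ℝ
  | [] => fun _ => 0
  | i :: l => fun ω => if 0 < L i ω ∧ M i ω ≤ L i ω then ((i:ℕ):ℝ)+1 else selAux L M l ω

theorem selAux_measurable {N : ℕ} {L M : Fin N → Ω → ℝ} (hL : ∀ i, Measurable (L i))
    (hM : ∀ i, Measurable (M i)) (l : List (Fin N)) : Measurable (selAux L M l) := by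
  induction l with
  | nil => exact measurable_const
  | cons i l ih =>
    exact Measurable.ite
      ((measurableSet_lt measurable_const (hL i)).inter (measurableSet_le (hM i) (hL i)))
      measurable_const ih

theorem selAux_val {N : ℕ} (L M : Fin N → Ω → ℝ) (l : List (Fin N)) (ω : Ω) :
    ∃ n : ℕ, n ≤ N ∧ selAux L M l ω = n := by
  induction l with
  | nil => exact ⟨0, Nat.zero_le _, by simp [selAux]⟩
  | cons i l ih =>
    by_cases h : 0 < L i ω ∧ M i ω ≤ L i ω
    · exact ⟨(i:ℕ)+1, i.isLt, by simp [selAux, h]⟩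
    · obtain ⟨n, hn, he⟩ := ih
      exact ⟨n, hn, by simp [selAux, h, he]⟩

theorem selAux_eq {N : ℕ} {L M : Fin N → Ω → ℝ} {l : List (Fin N)} {ω : Ω} {i : Fin N}
    (h : selAux L M l ω = ((i:ℕ):ℝ)+1) : 0 < L i ω ∧ M i ω ≤ L i ω := by
  induction l with
  | nil =>
    exfalso
    simp only [selAux] at h
    have : (0:ℝ) ≤ ((i:ℕ):ℝ) := Nat.cast_nonneg _
    linarith [h.symm]
  | cons j l ih =>
    simp only [selAux] at h
    split at h
    · rename_i hc
      have : ((j:ℕ):ℝ) = ((i:ℕ):ℝ) := by linarith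
      have hji : j = i := Fin.ext (Nat.cast_injective this)
      rwa [hji] at hc
    · exact ih h

theorem selAux_exists {N : ℕ} {L M : Fin N → Ω → ℝ} {l : List (Fin N)} {ω : Ω}
    (h : ∃ i ∈ l, 0 < L i ω ∧ M i ω ≤ L i ω) :
    ∃ i : Fin N, selAux L M l ω = ((i:ℕ):ℝ)+1 := by
  induction l with
  | nil => simp at h
  | cons j l ih =>
    by_cases hc : 0 < L j ω ∧ M j ω ≤ L j ω
    · exact ⟨j, by simp [selAux, hc]⟩
    · obtain ⟨i, hil, hi⟩ := h
      rcases List.mem_cons.1 hil with rfl | hil'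
      · exact absurd hi hc
      · obtain ⟨i', hi'⟩ := ih ⟨i, hil', hi⟩
        exact ⟨i', by simp [selAux, hc, hi']⟩

theorem selAux_congr {N : ℕ} {L M L' M' : Fin N → Ω → ℝ} (l : List (Fin N)) {ω : Ω}
    (h : ∀ i, L i ω = L' i ω ∧ M i ω = M' i ω) :
    selAux L M l ω = selAux L' M' l ω := by
  induction l with
  | nil => rfl
  | cons j l ih => simp only [selAux, (h j).1, (h j).2, ih]

section Phi

variable {d N : ℕ} {X : Fin N → Fin d → L0 P}

/-- Chosen coefficients of a member of the convex hull. -/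
noncomputable def Rep {W : Fin d → L0 P}
    (hW : ∃ lam : Fin N → L0 P, (∀ i, 0 ≤ lam i) ∧ (∑ i, lam i) = 1 ∧ W = ∑ i, lam i • X i) :
    Fin N → L0 P := hW.choose

theorem Rep_spec {W : Fin d → L0 P}
    (hW : ∃ lam : Fin N → L0 P, (∀ i, 0 ≤ lam i) ∧ (∑ i, lam i) = 1 ∧ W = ∑ i, lam i • X i) :
    (∀ i, 0 ≤ Rep hW i) ∧ (∑ i, Rep hW i) = 1 ∧ W = ∑ i, Rep hW i • X i := hW.choose_spec

/-- A measurable representative of a family of coefficients. -/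
noncomputable def Lfun (lam : Fin N → L0 P) (i : Fin N) : Ω → ℝ :=
  AEMeasurable.mk _ ((lam i).aestronglyMeasurable.aemeasurable)

theorem Lfun_meas (lam : Fin N → L0 P) (i : Fin N) : Measurable (Lfun lam i) :=
  AEMeasurable.measurable_mk _

theorem Lfun_ae (lam : Fin N → L0 P) (i : Fin N) : ⇑(lam i) =ᵐ[P] Lfun lam i :=
  AEMeasurable.ae_eq_mk _

noncomputable def phiRaw (lam mu : Fin N → L0 P) : L0 P :=
  AEEqFun.mk (selAux (Lfun lam) (Lfun mu) (List.finRange N))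
    ((selAux_measurable (Lfun_meas lam) (Lfun_meas mu) _).aestronglyMeasurable)

theorem phiRaw_coe (lam mu : Fin N → L0 P) :
    ⇑(phiRaw lam mu) =ᵐ[P] selAux (Lfun lam) (Lfun mu) (List.finRange N) :=
  AEEqFun.coeFn_mk _ _

open Classical in
/-- The labeling function. -/
noncomputable def phi (X : Fin N → Fin d → L0 P) (D : Set (Fin d → L0 P))
    (f : (Fin d → L0 P) → (Fin d → L0 P)) (hDsub : D ⊆ L0.conv P X)
    (hfS : ∀ Z ∈ L0.conv P X, f Z ∈ L0.conv P X) (Z : Fin d → L0 P) : L0 P :=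
  if hZ : Z ∈ D then phiRaw (Rep (hDsub hZ)) (Rep (hfS Z (hDsub hZ))) else 0

theorem phi_eq (hX : L0.AffInd P X) {D : Set (Fin d → L0 P)}
    {f : (Fin d → L0 P) → (Fin d → L0 P)} (hDsub : D ⊆ L0.conv P X)
    (hfS : ∀ Z ∈ L0.conv P X, f Z ∈ L0.conv P X) {Z : Fin d → L0 P} (hZ : Z ∈ D)
    (lam mu : Fin N → L0 P)
    (hlam : (∀ i, 0 ≤ lam i) ∧ (∑ i, lam i) = 1 ∧ Z = ∑ i, lam i • X i)
    (hmu : (∀ i, 0 ≤ mu i) ∧ (∑ i, mu i) = 1 ∧ f Z = ∑ i, mu i • X i) :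
    ∀ᵐ ω ∂P, phi X D f hDsub hfS Z ω
      = selAux (fun i => ⇑(lam i)) (fun i => ⇑(mu i)) (List.finRange N) ω := by
  have hr := Rep_spec (X := X) (hDsub hZ)
  have hr' := Rep_spec (X := X) (hfS Z (hDsub hZ))
  have h1 : Rep (hDsub hZ) = lam :=
    uniq hX _ _ hr.2.1 hlam.2.1 (by rw [← hr.2.2, ← hlam.2.2])
  have h2 : Rep (hfS Z (hDsub hZ)) = mu :=
    uniq hX _ _ hr'.2.1 hmu.2.1 (by rw [← hr'.2.2, ← hmu.2.2])
  simp only [phi, dif_pos hZ]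
  filter_upwards [phiRaw_coe (Rep (hDsub hZ)) (Rep (hfS Z (hDsub hZ))),
    ae_all_iff.2 (Lfun_ae (Rep (hDsub hZ))), ae_all_iff.2 (Lfun_ae (Rep (hfS Z (hDsub hZ))))]
    with ω hω hL hM
  rw [hω]
  exact selAux_congr _ fun i => ⟨by rw [← hL i, h1], by rw [← hM i, h2]⟩

/-- Local uniqueness of coefficients on a measurable set. -/
theorem coeff_loc (hX : L0.AffInd P X) {A : Set Ω} (hA : MeasurableSet A)
    (lam lam' : Fin N → L0 P) (h1 : (∑ i, lam i) = 1) (h1' : (∑ i, lam' i) = 1)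
    (hW : ∀ k, L0.ind P A * (∑ i, lam i • X i) k = L0.ind P A * (∑ i, lam' i • X i) k) :
    ∀ i, ∀ᵐ ω ∂P, ω ∈ A → lam i ω = lam' i ω := by
  set e := L0.ind P A with he
  set lam'' : Fin N → L0 P := fun i => e * lam' i + (1 - e) * lam i with hl''
  have hsum : (∑ i, lam'' i) = 1 := by
    apply AEEqFun.ext
    filter_upwards [coeFn_sum Finset.univ lam'', ae_all_iff.2 fun i => coeFn_glue e (lam' i) (lam i),
      sum_one_ae h1, sum_one_ae h1', (AEEqFun.coeFn_one : ⇑(1 : L0 P) =ᵐ[P] _)]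
      with ω hs hg hsl hsl' h1e
    rw [hs, h1e]
    simp only [Pi.one_apply]
    calc ∑ i, lam'' i ω = ∑ i, (e ω * lam' i ω + (1 - e ω) * lam i ω) :=
          Finset.sum_congr rfl fun i _ => hg i
      _ = e ω * (∑ i, lam' i ω) + (1 - e ω) * (∑ i, lam i ω) := by
          rw [Finset.sum_add_distrib, Finset.mul_sum, Finset.mul_sum]
      _ = 1 := by rw [hsl, hsl']; ring
  have hcomb : (∑ i, lam'' i • X i) = ∑ i, lam i • X i := by
    funext k
    apply AEEqFun.ext
    have hWk := (ind_mul_eq_iff hA _ _).1 (hW k)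
    filter_upwards [coeFn_sum_mul lam'' (fun i => X i k),
      ae_all_iff.2 fun i => coeFn_glue e (lam' i) (lam i),
      coeFn_sum_mul lam (fun i => X i k), coeFn_sum_mul lam' (fun i => X i k),
      hWk, ind_coe (P := P) hA] with ω hs hg hsl hsl' hWω hind
    rw [sum_smul_apply lam'' X k, sum_smul_apply lam X k, sum_smul_apply lam' X k] at *
    rw [hs, hsl]
    have hVk : ∑ i, lam i ω * X i k ω = (∑ i, lam i * X i k) ω := hsl.symm
    calc ∑ i, lam'' i ω * X i k ω
        = ∑ i, (e ω * lam' i ω + (1 - e ω) * lam i ω) * X i k ω :=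
          Finset.sum_congr rfl fun i _ => by rw [hg i]
      _ = e ω * (∑ i, lam' i ω * X i k ω) + (1 - e ω) * (∑ i, lam i ω * X i k ω) := by
          rw [Finset.mul_sum, Finset.mul_sum, ← Finset.sum_add_distrib]
          exact Finset.sum_congr rfl fun i _ => by ring
      _ = ∑ i, lam i ω * X i k ω := by
          by_cases hω : ω ∈ A
          · have h1ω : e ω = 1 := by rw [hind]; exact Set.indicator_of_mem hω _
            have : (∑ i, lam i * X i k) ω = (∑ i, lam' i * X i k) ω := hWω hω
            rw [h1ω, ← hsl, ← hsl', this]; ring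
          · have h0ω : e ω = 0 := by rw [hind]; exact Set.indicator_of_notMem hω _
            rw [h0ω]; ring
  have hzz : lam'' = lam := uniq hX _ _ hsum h1 hcomb
  intro i
  have hii : e * lam' i + (1 - e) * lam i = lam i := congrFun hzz i
  have hii' : ⇑(e * lam' i + (1 - e) * lam i) =ᵐ[P] ⇑(lam i) := by rw [hii]
  filter_upwards [hii', coeFn_glue e (lam' i) (lam i), ind_coe (P := P) hA] with ω hv hg hind hω
  have h1ω : e ω = 1 := by rw [hind]; exact Set.indicator_of_mem hω _
  rw [hg, h1ω] at hv
  simpa using hv.symm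

end Phi

end SB12

open MeasureTheory in
/-- every local function `φ` on a σ-stable `D ⊆ S` with values in
`{0,…,N}(𝒜)` satisfying (i) and (ii) is a proper labeling function (it takes values in
`{1,…,N}(𝒜)` and `P({φ(X)=i} ⊆ {λᵢ>0}) = 1`), and such a `φ` exists. -/
theorem stmt_12 {Ω : Type*} [MeasurableSpace Ω] (P : Measure Ω) [IsProbabilityMeasure P]
    {d N : ℕ} (X : Fin N → Fin d → L0 P) (hX : L0.AffInd P X)
    (D : Set (Fin d → L0 P)) (hDsub : D ⊆ L0.conv P X) (hDsig : L0.sigmaHull P D = D)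
    (f : (Fin d → L0 P) → (Fin d → L0 P))
    (hfS : ∀ Z ∈ L0.conv P X, f Z ∈ L0.conv P X)
    (hfloc : L0.IsLocal P (L0.conv P X) f) :
    (∀ φ : (Fin d → L0 P) → L0 P,
      L0.IsLocalScalar P D φ →
      (∀ Z ∈ D, ∀ᵐ ω ∂P, ∃ n : ℕ, n ≤ N ∧ φ Z ω = n) →
      (∀ Z ∈ D, ∀ lam mu : Fin N → L0 P,
        ((∀ i, 0 ≤ lam i) ∧ (∑ i, lam i) = 1 ∧ Z = ∑ i, lam i • X i) →
        ((∀ i, 0 ≤ mu i) ∧ (∑ i, mu i) = 1 ∧ f Z = ∑ i, mu i • X i) →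
        (∀ i : Fin N, ∀ᵐ ω ∂P, φ Z ω = (i : ℕ) + 1 → 0 < lam i ω ∧ mu i ω ≤ lam i ω) ∧
        (∀ᵐ ω ∂P, (∃ i : Fin N, 0 < lam i ω ∧ mu i ω ≤ lam i ω) →
          ∃ i : Fin N, φ Z ω = (i : ℕ) + 1)) →
      ((∀ Z ∈ D, ∀ᵐ ω ∂P, ∃ i : Fin N, φ Z ω = (i : ℕ) + 1) ∧
        (∀ Z ∈ D, ∀ lam : Fin N → L0 P,
          ((∀ i, 0 ≤ lam i) ∧ (∑ i, lam i) = 1 ∧ Z = ∑ i, lam i • X i) →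
          ∀ i : Fin N, ∀ᵐ ω ∂P, φ Z ω = (i : ℕ) + 1 → 0 < lam i ω)))
    ∧ (∃ φ : (Fin d → L0 P) → L0 P,
        L0.IsLocalScalar P D φ ∧
        (∀ Z ∈ D, ∀ᵐ ω ∂P, ∃ n : ℕ, n ≤ N ∧ φ Z ω = n) ∧
        (∀ Z ∈ D, ∀ lam mu : Fin N → L0 P,
          ((∀ i, 0 ≤ lam i) ∧ (∑ i, lam i) = 1 ∧ Z = ∑ i, lam i • X i) →
          ((∀ i, 0 ≤ mu i) ∧ (∑ i, mu i) = 1 ∧ f Z = ∑ i, mu i • X i) →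
          (∀ i : Fin N, ∀ᵐ ω ∂P, φ Z ω = (i : ℕ) + 1 → 0 < lam i ω ∧ mu i ω ≤ lam i ω) ∧
          (∀ᵐ ω ∂P, (∃ i : Fin N, 0 < lam i ω ∧ mu i ω ≤ lam i ω) →
            ∃ i : Fin N, φ Z ω = (i : ℕ) + 1))) := by
  classical
  constructor
  · -- Part 1: any such φ is a proper labeling function
    intro φ hφloc hφval hφcond
    constructor
    · intro Z hZ
      have hlam := SB12.Rep_spec (P := P) (X := X) (hDsub hZ)
      have hmu := SB12.Rep_spec (P := P) (X := X) (hfS Z (hDsub hZ))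
      have h2 := (hφcond Z hZ _ _ hlam hmu).2
      filter_upwards [h2, SB12.nonneg_ae hlam.1, SB12.sum_one_ae hlam.2.1,
        SB12.nonneg_ae hmu.1, SB12.sum_one_ae hmu.2.1] with ω h2ω ha hb hc hd
      exact h2ω (SB12.exists_good _ _ ha hb hc hd)
    · intro Z hZ lam hlam i
      have hmu := SB12.Rep_spec (P := P) (X := X) (hfS Z (hDsub hZ))
      have h1 := (hφcond Z hZ lam _ hlam hmu).1 i
      filter_upwards [h1] with ω h1ω hφω
      exact (h1ω hφω).1
  · -- Part 2: existence
    refine ⟨SB12.phi X D f hDsub hfS, ?_, ?_, ?_⟩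
    · -- locality
      intro A Xs Z hpart hXs hZ hglue j
      rw [SB12.ind_mul_eq_iff (hpart.meas j)]
      have hrZ := SB12.Rep_spec (P := P) (X := X) (hDsub hZ)
      have hrX := SB12.Rep_spec (P := P) (X := X) (hDsub (hXs j))
      have hrZ' := SB12.Rep_spec (P := P) (X := X) (hfS Z (hDsub hZ))
      have hrX' := SB12.Rep_spec (P := P) (X := X) (hfS (Xs j) (hDsub (hXs j)))
      have hglue' := hfloc A Xs Z hpart (fun i => hDsub (hXs i)) (hDsub hZ) hglue
      have hWlam : ∀ k, L0.ind P (A j) * (∑ i, SB12.Rep (P := P) (X := X) (hDsub hZ) i • X i) k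
          = L0.ind P (A j) * (∑ i, SB12.Rep (P := P) (X := X) (hDsub (hXs j)) i • X i) k := by
        intro k
        rw [← hrZ.2.2, ← hrX.2.2]
        exact hglue k j
      have hWmu : ∀ k, L0.ind P (A j) * (∑ i, SB12.Rep (P := P) (X := X) (hfS Z (hDsub hZ)) i • X i) k
          = L0.ind P (A j) * (∑ i, SB12.Rep (P := P) (X := X) (hfS (Xs j) (hDsub (hXs j))) i • X i) k := by
        intro k
        rw [← hrZ'.2.2, ← hrX'.2.2]
        exact hglue' k j
      have hL := SB12.coeff_loc hX (hpart.meas j) _ _ hrZ.2.1 hrX.2.1 hWlam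
      have hM := SB12.coeff_loc hX (hpart.meas j) _ _ hrZ'.2.1 hrX'.2.1 hWmu
      simp only [SB12.phi, dif_pos hZ, dif_pos (hXs j)]
      filter_upwards [SB12.phiRaw_coe (SB12.Rep (P := P) (X := X) (hDsub hZ)) (SB12.Rep (P := P) (X := X) (hfS Z (hDsub hZ))),
        SB12.phiRaw_coe (SB12.Rep (P := P) (X := X) (hDsub (hXs j))) (SB12.Rep (P := P) (X := X) (hfS (Xs j) (hDsub (hXs j)))),
        ae_all_iff.2 hL, ae_all_iff.2 hM,
        ae_all_iff.2 (SB12.Lfun_ae (SB12.Rep (P := P) (X := X) (hDsub hZ))),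
        ae_all_iff.2 (SB12.Lfun_ae (SB12.Rep (P := P) (X := X) (hDsub (hXs j)))),
        ae_all_iff.2 (SB12.Lfun_ae (SB12.Rep (P := P) (X := X) (hfS Z (hDsub hZ)))),
        ae_all_iff.2 (SB12.Lfun_ae (SB12.Rep (P := P) (X := X) (hfS (Xs j) (hDsub (hXs j)))))]
        with ω hc1 hc2 hLω hMω ha1 ha2 ha3 ha4 hωA
      rw [hc1, hc2]
      exact SB12.selAux_congr _ fun i =>
        ⟨by rw [← ha1 i, ← ha2 i]; exact hLω i hωA,
         by rw [← ha3 i, ← ha4 i]; exact hMω i hωA⟩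
    · -- values in {0, …, N}
      intro Z hZ
      have hlam := SB12.Rep_spec (P := P) (X := X) (hDsub hZ)
      have hmu := SB12.Rep_spec (P := P) (X := X) (hfS Z (hDsub hZ))
      filter_upwards [SB12.phi_eq hX hDsub hfS hZ _ _ hlam hmu] with ω hω
      rw [hω]
      exact SB12.selAux_val _ _ _ ω
    · -- conditions (i) and (ii)
      intro Z hZ lam mu hlam hmu
      constructor
      · intro i
        filter_upwards [SB12.phi_eq hX hDsub hfS hZ lam mu hlam hmu] with ω hω hφω
        rw [hω] at hφω
        exact SB12.selAux_eq hφω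
      · filter_upwards [SB12.phi_eq hX hDsub hfS hZ lam mu hlam hmu] with ω hω hex
        obtain ⟨i, hi⟩ := hex
        obtain ⟨i', hi'⟩ := SB12.selAux_exists (L := fun i => ⇑(lam i)) (M := fun i => ⇑(mu i)) (l := List.finRange N)
          ⟨i, List.mem_finRange i, hi⟩
        exact ⟨i', by rw [hω]; exact hi'⟩
end

section
/- Let K be a nonempty, L⁰-convex, sequentially closed and bounded subset of (L⁰)^d, X ∈ (L⁰)^d and Y ∈ K. Then ‖X − Y‖ ≤ ‖X − Z‖ P-almost surely for every Z ∈ K if and only if ⟨X − Y, Z − Y⟩ ≤ 0 P-almost surely for every Z ∈ K. -/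
open MeasureTheory Filter

section AuxStmt15
open MeasureTheory Filter
variable {Ω : Type*} [MeasurableSpace Ω] (P : Measure Ω)

lemma aux15_coeFn_finset_sum {ι : Type*} (s : Finset ι) (f : ι → (Ω →ₘ[P] ℝ)) :
    (↑(∑ i ∈ s, f i) : Ω → ℝ) =ᵐ[P] fun ω => ∑ i ∈ s, f i ω := by
  classical
  induction s using Finset.induction_on with
  | empty =>
      simp only [Finset.sum_empty]
      exact AEEqFun.coeFn_zero
  | @insert a s h ih =>
    rw [Finset.sum_insert h]
    filter_upwards [AEEqFun.coeFn_add (f a) (∑ i ∈ s, f i), ih] with ω h1 h2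
    simp only [Finset.sum_insert h, h1, Pi.add_apply, h2]

lemma aux15_coe_inner {d : ℕ} (W V : Fin d → Ω →ₘ[P] ℝ) :
    (↑(L0.inner P W V) : Ω → ℝ) =ᵐ[P] fun ω => ∑ k, W k ω * V k ω := by
  have h1 := aux15_coeFn_finset_sum P Finset.univ (fun k => W k * V k)
  have h2 : ∀ᵐ ω ∂P, ∀ k, (W k * V k) ω = W k ω * V k ω :=
    ae_all_iff.mpr fun k => AEEqFun.coeFn_mul (W k) (V k)
  filter_upwards [h1, h2] with ω h1 h2
  show (↑(∑ k, W k * V k) : Ω → ℝ) ω = _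
  rw [h1]; exact Finset.sum_congr rfl fun k _ => h2 k

lemma aux15_coe_norm {d : ℕ} (W : Fin d → Ω →ₘ[P] ℝ) :
    (↑(L0.norm P W) : Ω → ℝ) =ᵐ[P] fun ω => Real.sqrt (∑ k, W k ω * W k ω) := by
  filter_upwards [AEEqFun.coeFn_comp Real.sqrt Real.continuous_sqrt (L0.inner P W W),
    aux15_coe_inner P W W] with ω h1 h2
  show (L0.norm P W) ω = _
  rw [show L0.norm P W = AEEqFun.comp Real.sqrt Real.continuous_sqrt (L0.inner P W W) from rfl,
    h1, Function.comp_apply, h2]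

lemma aux15_sq_expand {d : ℕ} (a b : Fin d → ℝ) (t : ℝ) :
    ∑ k, (a k - t * b k) * (a k - t * b k)
      = ∑ k, a k * a k - 2 * t * (∑ k, a k * b k) + t ^ 2 * (∑ k, b k * b k) := by
  rw [Finset.mul_sum, Finset.mul_sum, ← Finset.sum_sub_distrib, ← Finset.sum_add_distrib]
  exact Finset.sum_congr rfl fun k _ => by ring

end AuxStmt15

open MeasureTheory in
/-- characterization of the projection onto a nonempty, `L⁰`-convex,
sequentially closed and bounded set. -/
theorem stmt_15 {Ω : Type*} [MeasurableSpace Ω] (P : Measure Ω) [IsProbabilityMeasure P]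
    {d : ℕ} (K : Set (Fin d → L0 P)) (hne : K.Nonempty)
    (hconv : L0.L0Convex P K) (hclosed : L0.SeqClosed P K) (hbdd : L0.Bounded P K)
    (X : Fin d → L0 P) (Y : Fin d → L0 P) (hY : Y ∈ K) :
    (∀ Z ∈ K, L0.norm P (X - Y) ≤ L0.norm P (X - Z)) ↔
      (∀ Z ∈ K, L0.inner P (X - Y) (Z - Y) ≤ 0) := by
  classical
  set A : Fin d → L0 P := X - Y with hA
  constructor
  · intro h Z hZ
    set B : Fin d → L0 P := Z - Y with hB
    -- pointwise key inequality for each n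
    have hkey : ∀ n : ℕ, ∀ᵐ ω ∂P,
        2 * (∑ k, A k ω * B k ω) ≤ ((n : ℝ) + 1)⁻¹ * ∑ k, B k ω * B k ω := by
      intro n
      set c : ℝ := ((n : ℝ) + 1)⁻¹ with hc
      have hcpos : 0 < c := by positivity
      have hc1 : c ≤ 1 := by
        rw [hc]
        have h1n : (1:ℝ) ≤ (n:ℝ) + 1 := by
          have : (0:ℝ) ≤ (n:ℝ) := Nat.cast_nonneg n
          linarith
        rw [inv_le_one_iff₀]
        right; exact h1n
      set lam : L0 P := AEEqFun.const Ω (μ := P) c with hlam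
      have hlam0 : 0 ≤ lam := by
        rw [← AEEqFun.coeFn_le]
        filter_upwards [AEEqFun.coeFn_const (α := Ω) (μ := P) c, AEEqFun.coeFn_zero (β := ℝ) (μ := P)]
          with ω h1 h2
        rw [h1, h2]; exact le_of_lt hcpos
      have hlam1 : lam ≤ 1 := by
        rw [← AEEqFun.coeFn_le]
        filter_upwards [AEEqFun.coeFn_const (α := Ω) (μ := P) c, AEEqFun.coeFn_one (β := ℝ) (μ := P)]
          with ω h1 h2
        rw [h1, h2]; exact hc1
      set Zn : Fin d → L0 P := lam • Z + (1 - lam) • Y with hZn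
      have hZnK : Zn ∈ K := hconv Z hZ Y hY lam hlam0 hlam1
      have hnorm := h Zn hZnK
      have hsum : ∀ᵐ ω ∂P,
          ∑ k, A k ω * A k ω ≤ ∑ k, (X - Zn) k ω * (X - Zn) k ω := by
        have := AEEqFun.coeFn_le.mpr hnorm
        filter_upwards [this, aux15_coe_norm P A, aux15_coe_norm P (X - Zn)]
          with ω hle h1 h2
        rw [h1, h2] at hle
        have h0 : (0:ℝ) ≤ ∑ k, (X - Zn) k ω * (X - Zn) k ω :=
          Finset.sum_nonneg fun k _ => mul_self_nonneg _
        exact (Real.sqrt_le_sqrt_iff h0).mp hle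
      have hpt : ∀ᵐ ω ∂P, ∀ k, (X - Zn) k ω = A k ω - c * B k ω := by
        rw [ae_all_iff]
        intro k
        have heq : (X - Zn) k = X k - (lam * Z k + (1 - lam) * Y k) := by
          simp only [hZn, Pi.sub_apply, Pi.add_apply, Pi.smul_apply, smul_eq_mul]
        rw [heq]
        filter_upwards [AEEqFun.coeFn_sub (X k) (lam * Z k + (1 - lam) * Y k),
          AEEqFun.coeFn_add (lam * Z k) ((1 - lam) * Y k),
          AEEqFun.coeFn_mul lam (Z k), AEEqFun.coeFn_mul (1 - lam) (Y k),
          AEEqFun.coeFn_sub (1 : L0 P) lam, AEEqFun.coeFn_one (β := ℝ) (μ := P),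
          AEEqFun.coeFn_const (α := Ω) (μ := P) c,
          AEEqFun.coeFn_sub (X k) (Y k), AEEqFun.coeFn_sub (Z k) (Y k)]
          with ω e1 e2 e3 e4 e5 e6 e7 e8 e9
        have hAk : A k ω = X k ω - Y k ω := by
          simp only [hA, Pi.sub_apply]; rw [e8, Pi.sub_apply]
        have hBk : B k ω = Z k ω - Y k ω := by
          simp only [hB, Pi.sub_apply]; rw [e9, Pi.sub_apply]
        have hlamω : lam ω = c := by rw [hlam, e7]; rfl
        rw [e1, Pi.sub_apply, e2, Pi.add_apply, e3, e4, Pi.mul_apply, Pi.mul_apply,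
          e5, Pi.sub_apply, e6, Pi.one_apply, hlamω, hAk, hBk]
        ring
      filter_upwards [hsum, hpt] with ω hsum hpt
      have hs2 : ∑ k, (X - Zn) k ω * (X - Zn) k ω
          = ∑ k, (A k ω - c * B k ω) * (A k ω - c * B k ω) :=
        Finset.sum_congr rfl fun k _ => by rw [hpt k]
      rw [hs2, aux15_sq_expand] at hsum
      have h2 : c * (2 * (∑ k, A k ω * B k ω)) ≤ c * (c * ∑ k, B k ω * B k ω) := by
        nlinarith [hsum]
      exact le_of_mul_le_mul_left h2 hcpos
    -- take the limit n → ∞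
    have hall : ∀ᵐ ω ∂P, ∀ n : ℕ,
        2 * (∑ k, A k ω * B k ω) ≤ ((n : ℝ) + 1)⁻¹ * ∑ k, B k ω * B k ω :=
      ae_all_iff.mpr hkey
    rw [← AEEqFun.coeFn_le]
    filter_upwards [hall, aux15_coe_inner P A B, AEEqFun.coeFn_zero (β := ℝ) (μ := P)]
      with ω hall h1 h2
    rw [h1, h2, Pi.zero_apply]
    have ht : Tendsto (fun n : ℕ => ((n : ℝ) + 1)⁻¹ * ∑ k, B k ω * B k ω) atTop
        (nhds (0 * ∑ k, B k ω * B k ω)) := by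
      apply Tendsto.mul_const
      exact (tendsto_atTop_add_const_right atTop (1:ℝ)
        tendsto_natCast_atTop_atTop).inv_tendsto_atTop
    rw [zero_mul] at ht
    have := ge_of_tendsto' ht (fun n => hall n)
    linarith
  · intro h Z hZ
    set B : Fin d → L0 P := Z - Y with hB
    have hc : ∀ᵐ ω ∂P, ∑ k, A k ω * B k ω ≤ 0 := by
      have := AEEqFun.coeFn_le.mpr (h Z hZ)
      filter_upwards [this, aux15_coe_inner P A B, AEEqFun.coeFn_zero (β := ℝ) (μ := P)]
        with ω hle h1 h2
      rw [h1, h2, Pi.zero_apply] at hle; exact hle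
    have hpt : ∀ᵐ ω ∂P, ∀ k, (X - Z) k ω = A k ω - B k ω := by
      rw [ae_all_iff]
      intro k
      have heq : (X - Z) k = A k - B k := by
        show X k - Z k = (X - Y) k - (Z - Y) k
        simp only [Pi.sub_apply]
        abel
      rw [heq]
      filter_upwards [AEEqFun.coeFn_sub (A k) (B k)] with ω e1
      rw [e1, Pi.sub_apply]
    rw [← AEEqFun.coeFn_le]
    filter_upwards [hc, hpt, aux15_coe_norm P A, aux15_coe_norm P (X - Z)]
      with ω hc hpt h1 h2
    rw [h1, h2]
    apply Real.sqrt_le_sqrt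
    have hs2 : ∑ k, (X - Z) k ω * (X - Z) k ω
        = ∑ k, (A k ω - 1 * B k ω) * (A k ω - 1 * B k ω) :=
      Finset.sum_congr rfl fun k _ => by rw [hpt k]; ring
    rw [hs2, aux15_sq_expand]
    have h0 : (0:ℝ) ≤ ∑ k, B k ω * B k ω :=
      Finset.sum_nonneg fun k _ => mul_self_nonneg _
    nlinarith [hc, h0]
end
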